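/- arXiv:2010.05833 — 5 statements merged into one kernel-verified Lean document; each statement's English description precedes it below -/
import Mathlib

section
/- Let $P_m$ denote the path graph on $m$ vertices. Then the number of rooted spanning forests of $P_{2n+1}$ (spanning forests with one chosen root per component) equals $\Phi_{4n+2}$, the $(4n+2)$-th Fibonacci number. -/
/-- The number of rooted spanning forests of `G`: pairs of a spanning acyclic subgraph
(given by its edge set, isolated vertices allowed) together with a choice of one root in
each connected component. -/
noncomputable def rootedSpanningForestCard {V : Type*} [Fintype V] (G : SimpleGraph V) : ℕ :=
  Nat.card (Σ F : {F : Set (Sym2 V) // F ⊆ G.edgeSet ∧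
      (SimpleGraph.fromEdgeSet F).IsAcyclic},
    {f : (SimpleGraph.fromEdgeSet F.1).ConnectedComponent → V //
      ∀ c, (SimpleGraph.fromEdgeSet F.1).connectedComponentMk (f c) = c})

namespace Stmt8

open SimpleGraph Finset


variable {k : ℕ}

/-- edge `i` of the path graph on `k+1` vertices -/
def pe (i : Fin k) : Sym2 (Fin (k+1)) := s(i.castSucc, i.succ)

lemma fin3_cases (x : Fin 3) : x = 0 ∨ x = 1 ∨ x = 2 := by revert x; decide

lemma fin3_eq_one (x : Fin 3) (h0 : x ≠ 0) (h2 : x ≠ 2) : x = 1 := by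
  rcases fin3_cases x with h | h | h <;> tauto

lemma pe_mem_edgeSet (i : Fin k) : pe i ∈ (pathGraph (k+1)).edgeSet := by
  rw [pe, mem_edgeSet, pathGraph_adj]
  left; simp

lemma exists_pe {x : Sym2 (Fin (k+1))} (hx : x ∈ (pathGraph (k+1)).edgeSet) :
    ∃ i : Fin k, x = pe i := by
  induction x using Sym2.ind with
  | _ u v =>
    rw [mem_edgeSet, pathGraph_adj] at hx
    rcases hx with h | h
    · have hlt : u.val < k := by have := v.isLt; omega
      refine ⟨⟨u.val, hlt⟩, ?_⟩
      have h1 : u = Fin.castSucc ⟨u.val, hlt⟩ := by ext; simp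
      have h2 : v = Fin.succ ⟨u.val, hlt⟩ := by ext; simp [← h]
      rw [pe, ← h1, ← h2]
    · have hlt : v.val < k := by have := u.isLt; omega
      refine ⟨⟨v.val, hlt⟩, ?_⟩
      have h1 : v = Fin.castSucc ⟨v.val, hlt⟩ := by ext; simp
      have h2 : u = Fin.succ ⟨v.val, hlt⟩ := by ext; simp [← h]
      rw [pe, ← h1, ← h2, Sym2.eq_swap]

lemma pe_inj : Function.Injective (pe (k := k)) := by
  intro i j h
  rw [pe, pe, Sym2.eq_iff] at h
  rcases h with ⟨h1, _⟩ | ⟨h1, h2⟩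
  · exact Fin.castSucc_injective _ h1
  · have e1 := congrArg Fin.val h1
    have e2 := congrArg Fin.val h2
    simp at e1 e2; omega

lemma reach_const {α : Type*} {G : SimpleGraph α} {β : Sort*} (g : α → β)
    (h : ∀ a b, G.Adj a b → g a = g b) {u v : α} (hr : G.Reachable u v) : g u = g v := by
  obtain ⟨p⟩ := hr
  induction p with
  | nil => rfl
  | cons ha _ ih => exact (h _ _ ha).trans ih

lemma cross_eq {a b : Fin (k+1)} (hadj : (pathGraph (k+1)).Adj a b) {i : Fin k}
    (h1 : a.val ≤ i.val) (h2 : ¬ b.val ≤ i.val) : s(a, b) = pe i := by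
  rw [pathGraph_adj] at hadj
  have hb := b.isLt
  have ha : a.val = i.val ∧ b.val = i.val + 1 := by
    have := i.isLt; omega
  have e1 : a = i.castSucc := by ext; simp [ha.1]
  have e2 : b = i.succ := by ext; simp [ha.2]
  rw [pe, e1, e2]

lemma cut {F : Set (Sym2 (Fin (k+1)))} (hF : F ⊆ (pathGraph (k+1)).edgeSet)
    {i : Fin k} (hi : pe i ∉ F) {u v : Fin (k+1)}
    (hr : (fromEdgeSet F).Reachable u v) : (u.val ≤ i.val ↔ v.val ≤ i.val) := by
  have key : ∀ a b : Fin (k+1), (fromEdgeSet F).Adj a b →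
      decide (a.val ≤ i.val) = decide (b.val ≤ i.val) := by
    intro a b hab
    obtain ⟨hmem, hne⟩ := (fromEdgeSet_adj _).mp hab
    have hadj : (pathGraph (k+1)).Adj a b := (mem_edgeSet _).mp (hF hmem)
    by_contra hdec
    rcases Decidable.em (a.val ≤ i.val) with h1 | h1 <;>
      rcases Decidable.em (b.val ≤ i.val) with h2 | h2
    · simp [h1, h2] at hdec
    · exact hi (cross_eq hadj h1 h2 ▸ hmem)
    · exact hi ((Sym2.eq_swap.trans (cross_eq hadj.symm h2 h1)) ▸ hmem)
    · simp [h1, h2] at hdec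
  simpa using reach_const _ key hr

lemma reach_interval {F : Set (Sym2 (Fin (k+1)))}
    {a b : Fin (k+1)} (hab : a.val ≤ b.val)
    (h : ∀ i : Fin k, a.val ≤ i.val → i.val < b.val → pe i ∈ F) :
    (fromEdgeSet F).Reachable a b := by
  obtain ⟨d, hd⟩ : ∃ d, b.val - a.val = d := ⟨_, rfl⟩
  induction d generalizing a with
  | zero =>
    have : a = b := by ext; omega
    rw [this]
  | succ d ih =>
    have hlt : a.val < b.val := by omega
    have hik : a.val < k := by have := b.isLt; omega
    set i : Fin k := ⟨a.val, hik⟩ with hi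
    have hca : i.castSucc = a := by ext; simp [hi]
    have hadj : (fromEdgeSet F).Adj a i.succ := by
      rw [fromEdgeSet_adj _]
      refine ⟨?_, ?_⟩
      · rw [show s(a, i.succ) = pe i by rw [pe, hca]]
        exact h i le_rfl hlt
      · intro heq
        have := congrArg Fin.val heq
        simp [hi] at this
    refine hadj.reachable.trans (ih ?_ ?_ ?_)
    · simp [hi]; omega
    · intro j hj1 hj2
      refine h j ?_ hj2
      simp [hi] at hj1; omega
    · simp [hi]; omega

lemma acyclic_sub {F : Set (Sym2 (Fin (k+1)))} (hF : F ⊆ (pathGraph (k+1)).edgeSet) :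
    (fromEdgeSet F).IsAcyclic := by
  rw [isAcyclic_iff_forall_adj_isBridge]
  intro u v huv
  rw [isBridge_iff]
  show ¬ (fromEdgeSet F \ fromEdgeSet {s(u, v)}).Reachable u v
  obtain ⟨he, hne⟩ := (fromEdgeSet_adj _).mp huv
  obtain ⟨i, hi⟩ := exists_pe (hF he)
  intro hre
  have key : ∀ a b : Fin (k+1), (fromEdgeSet F \ fromEdgeSet {s(u, v)}).Adj a b →
      decide (a.val ≤ i.val) = decide (b.val ≤ i.val) := by
    intro a b hab
    rw [sdiff_adj] at hab
    obtain ⟨hab1, hab2⟩ := hab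
    obtain ⟨hmem, hne'⟩ := (fromEdgeSet_adj _).mp hab1
    have hadj : (pathGraph (k+1)).Adj a b := (mem_edgeSet _).mp (hF hmem)
    have hnuv : s(a, b) ≠ s(u, v) := by
      intro hc
      exact hab2 ((fromEdgeSet_adj _).mpr ⟨by rw [hc]; exact Set.mem_singleton _, hne'⟩)
    by_contra hdec
    rcases Decidable.em (a.val ≤ i.val) with h1 | h1 <;>
      rcases Decidable.em (b.val ≤ i.val) with h2 | h2
    · simp [h1, h2] at hdec
    · exact hnuv ((cross_eq hadj h1 h2).trans hi.symm)
    · exact hnuv ((Sym2.eq_swap.trans (cross_eq hadj.symm h2 h1)).trans hi.symm)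
    · simp [h1, h2] at hdec
  have hc := reach_const _ key hre
  rw [pe, Sym2.eq_iff] at hi
  rcases hi with ⟨hu, hv⟩ | ⟨hu, hv⟩ <;> subst hu <;> subst hv <;> simp at hc

/-! ### Words -/

def Valid (w : Fin (k+1) → Fin 3) : Prop :=
  w 0 ≠ 0 ∧ w (Fin.last k) ≠ 2 ∧ ∀ i : Fin k, ¬(w i.castSucc = 2 ∧ w i.succ = 0)

def FW (w : Fin (k+1) → Fin 3) : Set (Sym2 (Fin (k+1))) :=
  {x | ∃ i : Fin k, x = pe i ∧ (w i.castSucc = 2 ∨ w i.succ = 0)}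

lemma pe_mem_FW {w : Fin (k+1) → Fin 3} {i : Fin k} :
    pe i ∈ FW w ↔ (w i.castSucc = 2 ∨ w i.succ = 0) := by
  constructor
  · rintro ⟨j, hj, hw⟩
    rwa [pe_inj hj]
  · exact fun h => ⟨i, rfl, h⟩

lemma FW_sub (w : Fin (k+1) → Fin 3) : FW w ⊆ (pathGraph (k+1)).edgeSet := by
  rintro x ⟨i, rfl, -⟩; exact pe_mem_edgeSet i

def Rset (w : Fin (k+1) → Fin 3) (v : Fin (k+1)) : Finset (Fin (k+1)) :=
  univ.filter (fun j => v ≤ j ∧ w j ≠ 2)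

def Lset (w : Fin (k+1) → Fin 3) (v : Fin (k+1)) : Finset (Fin (k+1)) :=
  univ.filter (fun j => j ≤ v ∧ w j ≠ 0)

noncomputable def rootw (w : Fin (k+1) → Fin 3) (v : Fin (k+1)) : Fin (k+1) :=
  if w v = 2 then
    (if h : (Rset w v).Nonempty then (Rset w v).min' h else v)
  else if w v = 0 then
    (if h : (Lset w v).Nonempty then (Lset w v).max' h else v)
  else v

lemma rootw_eq_self {w : Fin (k+1) → Fin 3} {v : Fin (k+1)} (h : w v = 1) :
    rootw w v = v := by
  rw [rootw, if_neg (by rw [h]; decide), if_neg (by rw [h]; decide)]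

lemma rootw_spec2 {w : Fin (k+1) → Fin 3} (hv : Valid w) {v : Fin (k+1)} (h2 : w v = 2) :
    v.val < (rootw w v).val ∧ w (rootw w v) = 1 ∧
      ∀ j : Fin (k+1), v.val ≤ j.val → j.val < (rootw w v).val → w j = 2 := by
  have hne : (Rset w v).Nonempty := by
    refine ⟨Fin.last k, ?_⟩
    rw [Rset, mem_filter]
    exact ⟨mem_univ _, Fin.le_last v, hv.2.1⟩
  have hr : rootw w v = (Rset w v).min' hne := by rw [rootw, if_pos h2, dif_pos hne]
  set r := (Rset w v).min' hne with hrdef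
  have hrmem := (Rset w v).min'_mem hne
  simp only [Rset, mem_filter] at hrmem
  obtain ⟨-, hvr, hr2⟩ := hrmem
  have hvlt : v.val < r.val := by
    rcases Fin.lt_or_eq_of_le hvr with h | h
    · exact h
    · exact absurd (h ▸ h2) hr2
  have hall : ∀ j : Fin (k+1), v.val ≤ j.val → j.val < r.val → w j = 2 := by
    intro j hj1 hj2
    by_contra hj
    have hjmem : j ∈ Rset w v := by
      simp only [Rset, mem_filter]; exact ⟨mem_univ _, by rwa [Fin.le_def], hj⟩
    have : r ≤ j := (Rset w v).min'_le j hjmem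
    rw [Fin.le_def] at this; omega
  have hw1 : w r = 1 := by
    have hik : r.val - 1 < k := by have := r.isLt; omega
    set i : Fin k := ⟨r.val - 1, hik⟩ with hi
    have hcs : w i.castSucc = 2 := hall i.castSucc (by simp [hi]; omega) (by show r.val - 1 < r.val; omega)
    have hsr : i.succ = r := by ext; simp [hi]; omega
    have := hv.2.2 i
    rw [hcs, hsr] at this
    refine fin3_eq_one _ (by tauto) hr2
  rw [hr]
  exact ⟨hvlt, hw1, hall⟩

lemma rootw_spec0 {w : Fin (k+1) → Fin 3} (hv : Valid w) {v : Fin (k+1)} (h0 : w v = 0) :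
    (rootw w v).val < v.val ∧ w (rootw w v) = 1 ∧
      ∀ j : Fin (k+1), (rootw w v).val < j.val → j.val ≤ v.val → w j = 0 := by
  have hne : (Lset w v).Nonempty := by
    refine ⟨0, ?_⟩
    rw [Lset, mem_filter]
    exact ⟨mem_univ _, Fin.zero_le v, hv.1⟩
  have hr : rootw w v = (Lset w v).max' hne := by
    rw [rootw, if_neg (by rw [h0]; decide), if_pos h0, dif_pos hne]
  set r := (Lset w v).max' hne with hrdef
  have hrmem := (Lset w v).max'_mem hne
  simp only [Lset, mem_filter] at hrmem
  obtain ⟨-, hvr, hr0⟩ := hrmem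
  have hvlt : r.val < v.val := by
    rcases Fin.lt_or_eq_of_le hvr with h | h
    · exact h
    · exact absurd (h.symm ▸ h0) hr0
  have hall : ∀ j : Fin (k+1), r.val < j.val → j.val ≤ v.val → w j = 0 := by
    intro j hj1 hj2
    by_contra hj
    have hjmem : j ∈ Lset w v := by
      simp only [Lset, mem_filter]; exact ⟨mem_univ _, by rwa [Fin.le_def], hj⟩
    have : j ≤ r := (Lset w v).le_max' j hjmem
    rw [Fin.le_def] at this; omega
  have hw1 : w r = 1 := by
    have hik : r.val < k := by have := v.isLt; omega
    set i : Fin k := ⟨r.val, hik⟩ with hi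
    have hcs : w i.succ = 0 := hall i.succ (by simp [hi]) (by simp [hi]; omega)
    have hcr : i.castSucc = r := by ext; simp [hi]
    have := hv.2.2 i
    rw [hcs, hcr] at this
    refine fin3_eq_one _ hr0 (by tauto)
  rw [hr]
  exact ⟨hvlt, hw1, hall⟩

lemma rootw_isS {w : Fin (k+1) → Fin 3} (hv : Valid w) (v : Fin (k+1)) :
    w (rootw w v) = 1 := by
  rcases fin3_cases (w v) with h | h | h
  · exact (rootw_spec0 hv h).2.1
  · rw [rootw_eq_self h]; exact h
  · exact (rootw_spec2 hv h).2.1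

lemma rootw_reach {w : Fin (k+1) → Fin 3} (hv : Valid w) (v : Fin (k+1)) :
    (fromEdgeSet (FW w)).Reachable v (rootw w v) := by
  rcases fin3_cases (w v) with h | h | h
  · obtain ⟨hlt, -, hall⟩ := rootw_spec0 hv h
    refine (reach_interval (le_of_lt hlt) ?_).symm
    intro i hi1 hi2
    refine pe_mem_FW.mpr (Or.inr (hall i.succ ?_ ?_)) <;> simp <;> omega
  · rw [rootw_eq_self h]
  · obtain ⟨hlt, -, hall⟩ := rootw_spec2 hv h
    refine reach_interval (le_of_lt hlt) ?_
    intro i hi1 hi2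
    refine pe_mem_FW.mpr (Or.inl (hall i.castSucc ?_ ?_)) <;> simp <;> omega

lemma rootw_adj_pe {w : Fin (k+1) → Fin 3} (hv : Valid w) {i : Fin k}
    (hmem : pe i ∈ FW w) : rootw w i.castSucc = rootw w i.succ := by
  have hvv : (i.castSucc : Fin (k+1)).val + 1 = (i.succ : Fin (k+1)).val := by simp
  rcases pe_mem_FW.mp hmem with h2 | h0
  · have hS0 : w i.succ ≠ 0 := fun hc => hv.2.2 i ⟨h2, hc⟩
    rcases fin3_cases (w i.succ) with h | h | h
    · exact absurd h hS0
    · -- w i.succ = 1 : root of castSucc is i.succ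
      rw [rootw_eq_self h]
      obtain ⟨hlt, hw1, hall⟩ := rootw_spec2 hv h2
      set r := rootw w i.castSucc
      have h1 : r.val ≤ i.succ.val := by
        by_contra hc
        have := hall i.succ (by omega) (by omega)
        rw [h] at this; exact absurd this (by decide)
      have : i.succ.val ≤ r.val := by omega
      ext; omega
    · -- both = 2: show roots equal by showing Rsets equal
      have hset : Rset w i.castSucc = Rset w i.succ := by
        ext j
        rw [Rset, Rset, mem_filter, mem_filter, Fin.le_def, Fin.le_def]
        constructor
        · rintro ⟨hu, hj1, hj2⟩
          refine ⟨hu, ?_, hj2⟩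
          have : j ≠ i.castSucc := fun hc => hj2 (hc ▸ h2)
          have : j.val ≠ i.castSucc.val := fun hc => this (by ext; exact hc)
          omega
        · rintro ⟨hu, hj1, hj2⟩
          exact ⟨hu, by omega, hj2⟩
      have hne1 : (Rset w i.castSucc).Nonempty :=
        ⟨Fin.last k, by rw [Rset, mem_filter]; exact ⟨mem_univ _, Fin.le_last _, hv.2.1⟩⟩
      have hne2 : (Rset w i.succ).Nonempty := hset ▸ hne1
      rw [rootw, if_pos h2, dif_pos hne1, rootw, if_pos h, dif_pos hne2]
      congr 1
  · have hC2 : w i.castSucc ≠ 2 := fun hc => hv.2.2 i ⟨hc, h0⟩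
    rcases fin3_cases (w i.castSucc) with h | h | h
    · -- both = 0 : Lsets equal
      have hset : Lset w i.castSucc = Lset w i.succ := by
        ext j
        rw [Lset, Lset, mem_filter, mem_filter, Fin.le_def, Fin.le_def]
        constructor
        · rintro ⟨hu, hj1, hj2⟩
          exact ⟨hu, by omega, hj2⟩
        · rintro ⟨hu, hj1, hj2⟩
          refine ⟨hu, ?_, hj2⟩
          have : j ≠ i.succ := fun hc => hj2 (hc ▸ h0)
          have : j.val ≠ i.succ.val := fun hc => this (by ext; exact hc)
          omega
      have hne1 : (Lset w i.castSucc).Nonempty :=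
        ⟨0, by rw [Lset, mem_filter]; exact ⟨mem_univ _, Fin.zero_le _, hv.1⟩⟩
      have hne2 : (Lset w i.succ).Nonempty := hset ▸ hne1
      rw [rootw, if_neg (by rw [h]; decide), if_pos h, rootw, if_neg (by rw [h0]; decide),
        if_pos h0, dif_pos hne1, dif_pos hne2]
      congr 1
    · -- w i.castSucc = 1 : root of i.succ is i.castSucc
      rw [rootw_eq_self h]
      obtain ⟨hlt, hw1, hall⟩ := rootw_spec0 hv h0
      set r := rootw w i.succ
      have h1 : i.castSucc.val ≤ r.val := by
        by_contra hc
        have := hall i.castSucc (by omega) (by omega)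
        rw [h] at this; exact absurd this (by decide)
      have : r.val ≤ i.castSucc.val := by omega
      ext; omega
    · exact absurd h hC2

lemma rootw_const {w : Fin (k+1) → Fin 3} (hv : Valid w) {a b : Fin (k+1)}
    (h : (fromEdgeSet (FW w)).Adj a b) : rootw w a = rootw w b := by
  obtain ⟨hmem, hne⟩ := (fromEdgeSet_adj _).mp h
  obtain ⟨i, hi, hcond⟩ := hmem
  have hmem' : pe i ∈ FW w := ⟨i, rfl, hcond⟩
  rw [pe, Sym2.eq_iff] at hi
  rcases hi with ⟨rfl, rfl⟩ | ⟨rfl, rfl⟩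
  · exact rootw_adj_pe hv hmem'
  · exact (rootw_adj_pe hv hmem').symm

/-! ### The word associated to a rooted forest -/

def wOf (F : Set (Sym2 (Fin (k+1)))) (f : (fromEdgeSet F).ConnectedComponent → Fin (k+1))
    (v : Fin (k+1)) : Fin 3 :=
  if f ((fromEdgeSet F).connectedComponentMk v) = v then 1
  else if v < f ((fromEdgeSet F).connectedComponentMk v) then 2 else 0

variable {F : Set (Sym2 (Fin (k+1)))} {f : (fromEdgeSet F).ConnectedComponent → Fin (k+1)}

lemma wOf_eq_one_iff {v : Fin (k+1)} :
    wOf F f v = 1 ↔ f ((fromEdgeSet F).connectedComponentMk v) = v := by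
  rw [wOf]; split_ifs with h1 h2
  · exact iff_of_true rfl h1
  · exact iff_of_false (by decide) h1
  · exact iff_of_false (by decide) h1

lemma wOf_eq_two_iff {v : Fin (k+1)} :
    wOf F f v = 2 ↔ v < f ((fromEdgeSet F).connectedComponentMk v) := by
  rw [wOf]; split_ifs with h1 h2
  · exact iff_of_false (by decide) (by rw [h1]; exact lt_irrefl v)
  · exact iff_of_true rfl h2
  · exact iff_of_false (by decide) h2

lemma wOf_eq_zero_iff {v : Fin (k+1)} :
    wOf F f v = 0 ↔ f ((fromEdgeSet F).connectedComponentMk v) < v := by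
  rw [wOf]; split_ifs with h1 h2
  · exact iff_of_false (by decide) (by rw [h1]; exact lt_irrefl v)
  · exact iff_of_false (by decide) (fun hc => lt_asymm h2 hc)
  · exact iff_of_true rfl (lt_of_le_of_ne (not_lt.mp h2) h1)

lemma reach_root (hf : ∀ c, (fromEdgeSet F).connectedComponentMk (f c) = c) (v : Fin (k+1)) :
    (fromEdgeSet F).Reachable (f ((fromEdgeSet F).connectedComponentMk v)) v :=
  SimpleGraph.ConnectedComponent.exact (hf ((fromEdgeSet F).connectedComponentMk v))

lemma wOf_valid (hF : F ⊆ (pathGraph (k+1)).edgeSet)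
    (hf : ∀ c, (fromEdgeSet F).connectedComponentMk (f c) = c) : Valid (wOf F f) := by
  refine ⟨?_, ?_, ?_⟩
  · intro hc
    have h := wOf_eq_zero_iff.mp hc
    rw [Fin.lt_def] at h
    simp at h
  · intro hc
    have h := wOf_eq_two_iff.mp hc
    rw [Fin.lt_def] at h
    have := (f ((fromEdgeSet F).connectedComponentMk (Fin.last k))).isLt
    simp at h; omega
  · rintro i ⟨h2, h0⟩
    have h2' := Fin.lt_def.mp (wOf_eq_two_iff.mp h2)
    have h0' := Fin.lt_def.mp (wOf_eq_zero_iff.mp h0)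
    simp only [Fin.coe_castSucc, Fin.val_succ] at h2' h0'
    by_cases hpe : pe i ∈ F
    · have hadj : (fromEdgeSet F).Adj i.castSucc i.succ := by
        refine (fromEdgeSet_adj _).mpr ⟨hpe, ?_⟩
        intro hc
        have := congrArg Fin.val hc
        simp at this
      have hmk := SimpleGraph.ConnectedComponent.connectedComponentMk_eq_of_adj hadj
      rw [hmk] at h2'
      omega
    · have hcut := cut hF hpe (reach_root hf i.castSucc)
      simp only [Fin.coe_castSucc] at hcut
      omega

lemma FW_wOf (hF : F ⊆ (pathGraph (k+1)).edgeSet)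
    (hf : ∀ c, (fromEdgeSet F).connectedComponentMk (f c) = c) : FW (wOf F f) = F := by
  ext x
  constructor
  · rintro ⟨i, rfl, hcond⟩
    by_contra hpe
    rcases hcond with h2 | h0
    · have h2' := Fin.lt_def.mp (wOf_eq_two_iff.mp h2)
      have hcut := cut hF hpe (reach_root hf i.castSucc)
      simp only [Fin.coe_castSucc] at h2' hcut
      omega
    · have h0' := Fin.lt_def.mp (wOf_eq_zero_iff.mp h0)
      have hcut := cut hF hpe (reach_root hf i.succ)
      simp only [Fin.val_succ] at h0' hcut
      omega
  · intro hx
    obtain ⟨i, rfl⟩ := exists_pe (hF hx)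
    have hadj : (fromEdgeSet F).Adj i.castSucc i.succ := by
      refine (fromEdgeSet_adj _).mpr ⟨hx, ?_⟩
      intro hc
      have := congrArg Fin.val hc
      simp at this
    have hmk := SimpleGraph.ConnectedComponent.connectedComponentMk_eq_of_adj hadj
    rcases lt_trichotomy i.castSucc (f ((fromEdgeSet F).connectedComponentMk i.castSucc))
      with h | h | h
    · exact ⟨i, rfl, Or.inl (wOf_eq_two_iff.mpr h)⟩
    · refine ⟨i, rfl, Or.inr (wOf_eq_zero_iff.mpr ?_)⟩
      rw [← hmk, ← h]
      exact Fin.castSucc_lt_succ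
    · refine ⟨i, rfl, Or.inr (wOf_eq_zero_iff.mpr ?_)⟩
      rw [← hmk]
      exact h.trans Fin.castSucc_lt_succ

lemma roots_agree (hF : F ⊆ (pathGraph (k+1)).edgeSet)
    (hf : ∀ c, (fromEdgeSet F).connectedComponentMk (f c) = c) (v : Fin (k+1)) :
    rootw (wOf F f) v = f ((fromEdgeSet F).connectedComponentMk v) := by
  have hv := wOf_valid hF hf
  have hFE := FW_wOf hF hf
  have hreach : (fromEdgeSet F).Reachable v (rootw (wOf F f) v) := by
    have := rootw_reach hv v
    rwa [hFE] at this
  have hmk := SimpleGraph.ConnectedComponent.sound hreach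
  have h1 := wOf_eq_one_iff.mp (rootw_isS hv v)
  rw [hmk]
  exact h1.symm

/-! ### The bijection -/

def RSF (k : ℕ) : Type :=
  Σ F : {F : Set (Sym2 (Fin (k+1))) // F ⊆ (pathGraph (k+1)).edgeSet ∧
      (SimpleGraph.fromEdgeSet F).IsAcyclic},
    {f : (SimpleGraph.fromEdgeSet F.1).ConnectedComponent → Fin (k+1) //
      ∀ c, (SimpleGraph.fromEdgeSet F.1).connectedComponentMk (f c) = c}

def psi (S : RSF k) : {w : Fin (k+1) → Fin 3 // Valid w} :=
  ⟨wOf S.1.1 S.2.1, wOf_valid S.1.2.1 S.2.2⟩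

lemma psi_inj : Function.Injective (psi (k := k)) := by
  rintro ⟨⟨F1, hs1, ha1⟩, f1, hf1⟩ ⟨⟨F2, hs2, ha2⟩, f2, hf2⟩ h
  have hw : wOf F1 f1 = wOf F2 f2 := congrArg Subtype.val h
  have hFE : F1 = F2 := by rw [← FW_wOf hs1 hf1, ← FW_wOf hs2 hf2, hw]
  subst hFE
  have hfe : f1 = f2 := by
    funext c
    induction c using SimpleGraph.ConnectedComponent.ind with
    | _ v =>
      rw [← roots_agree hs1 hf1 v, ← roots_agree hs2 hf2 v, hw]
  subst hfe
  rfl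

noncomputable def phi (w : {w : Fin (k+1) → Fin 3 // Valid w}) : RSF k :=
  ⟨⟨FW w.1, FW_sub _, acyclic_sub (FW_sub _)⟩,
    ⟨SimpleGraph.ConnectedComponent.lift (rootw w.1)
      (fun _ _ p _ => reach_const _ (fun _ _ h => rootw_const w.2 h) ⟨p⟩),
      by
        intro c
        induction c using SimpleGraph.ConnectedComponent.ind with
        | _ v =>
          exact (SimpleGraph.ConnectedComponent.sound (rootw_reach w.2 v)).symm⟩⟩

lemma psi_phi (w : {w : Fin (k+1) → Fin 3 // Valid w}) : psi (phi w) = w := by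
  apply Subtype.ext
  funext v
  have hmkeq : (phi w).2.1 ((fromEdgeSet (FW w.1)).connectedComponentMk v) = rootw w.1 v := rfl
  show wOf (FW w.1) (phi w).2.1 v = w.1 v
  rcases fin3_cases (w.1 v) with h | h | h
  · rw [h]
    exact wOf_eq_zero_iff.mpr (by rw [hmkeq]; exact Fin.lt_def.mpr (rootw_spec0 w.2 h).1)
  · rw [h]
    exact wOf_eq_one_iff.mpr (by rw [hmkeq]; exact rootw_eq_self h)
  · rw [h]
    exact wOf_eq_two_iff.mpr (by rw [hmkeq]; exact Fin.lt_def.mpr (rootw_spec2 w.2 h).1)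

lemma card_RSF : Nat.card (RSF k) = Nat.card {w : Fin (k+1) → Fin 3 // Valid w} :=
  Nat.card_congr (Equiv.ofBijective psi ⟨psi_inj, fun w => ⟨phi w, psi_phi w⟩⟩)

/-! ### Counting valid words -/

def good (w : Fin (k+1) → Fin 3) : Prop :=
  w 0 ≠ 0 ∧ ∀ i : Fin k, ¬(w i.castSucc = 2 ∧ w i.succ = 0)

noncomputable def A (k : ℕ) : ℕ :=
  Nat.card {w : Fin (k+1) → Fin 3 // good w ∧ w (Fin.last k) ≠ 2}

noncomputable def U (k : ℕ) : ℕ := Nat.card {w : Fin (k+1) → Fin 3 // good w}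

lemma valid_iff (w : Fin (k+1) → Fin 3) : Valid w ↔ good w ∧ w (Fin.last k) ≠ 2 := by
  rw [Valid, good]; tauto

lemma card_valid : Nat.card {w : Fin (k+1) → Fin 3 // Valid w} = A k :=
  Nat.card_congr (Equiv.subtypeEquivRight valid_iff)

lemma card_split {α : Type*} [Finite α] (Q p : α → Prop) :
    Nat.card {a // Q a} = Nat.card {a // Q a ∧ p a} + Nat.card {a // Q a ∧ ¬ p a} := by
  classical
  rw [← Nat.card_sum]
  refine Nat.card_congr (Equiv.symm ?_)
  refine Equiv.trans (Equiv.sumCongr (Equiv.subtypeSubtypeEquivSubtypeInter Q p).symm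
    (Equiv.subtypeSubtypeEquivSubtypeInter Q (fun a => ¬ p a)).symm) ?_
  exact Equiv.sumCompl (fun x : {a // Q a} => p x.1)

lemma good_init {w : Fin (k+2) → Fin 3} (h : good w) : good (Fin.init w) := by
  constructor
  · show w (Fin.castSucc 0) ≠ 0
    rw [Fin.castSucc_zero]
    exact h.1
  · rintro i ⟨h1, h2⟩
    refine h.2 i.castSucc ⟨h1, ?_⟩
    rw [Fin.succ_castSucc]
    exact h2

lemma good_snoc {v : Fin (k+1) → Fin 3} (hv : good v) {j : Fin 3}
    (hj : j = 0 → v (Fin.last k) ≠ 2) : good (Fin.snoc v j) := by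
  constructor
  · intro hc
    have h1 : Fin.snoc (α := fun _ : Fin (k+2) => Fin 3) v j (Fin.castSucc (0 : Fin (k+1)))
        = 0 := hc
    rw [Fin.snoc_castSucc] at h1
    exact hv.1 h1
  · intro i
    induction i using Fin.lastCases with
    | last =>
      rintro ⟨h1, h2⟩
      rw [Fin.succ_last, Fin.snoc_last] at h2
      rw [Fin.snoc_castSucc] at h1
      exact hj h2 h1
    | cast i =>
      rintro ⟨h1, h2⟩
      rw [Fin.snoc_castSucc] at h1
      rw [Fin.succ_castSucc, Fin.snoc_castSucc] at h2
      exact hv.2 i ⟨h1, h2⟩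

def E1 : {w : Fin (k+2) → Fin 3 // good w ∧ w (Fin.last (k+1)) = 1} ≃
    {v : Fin (k+1) → Fin 3 // good v} where
  toFun w := ⟨Fin.init w.1, good_init w.2.1⟩
  invFun v := ⟨Fin.snoc v.1 1, good_snoc v.2 (fun h => absurd h (by decide)), Fin.snoc_last _ _⟩
  left_inv w := Subtype.ext (by
    have h := Fin.snoc_init_self w.1
    rw [w.2.2] at h
    exact h)
  right_inv v := Subtype.ext (Fin.init_snoc (α := fun _ : Fin (k+2) => Fin 3) _ _)

def E2 : {w : Fin (k+2) → Fin 3 // good w ∧ w (Fin.last (k+1)) = 2} ≃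
    {v : Fin (k+1) → Fin 3 // good v} where
  toFun w := ⟨Fin.init w.1, good_init w.2.1⟩
  invFun v := ⟨Fin.snoc v.1 2, good_snoc v.2 (fun h => absurd h (by decide)), Fin.snoc_last _ _⟩
  left_inv w := Subtype.ext (by
    have h := Fin.snoc_init_self w.1
    rw [w.2.2] at h
    exact h)
  right_inv v := Subtype.ext (Fin.init_snoc (α := fun _ : Fin (k+2) => Fin 3) _ _)

def E0 : {w : Fin (k+2) → Fin 3 // good w ∧ w (Fin.last (k+1)) = 0} ≃
    {v : Fin (k+1) → Fin 3 // good v ∧ v (Fin.last k) ≠ 2} where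
  toFun w := ⟨Fin.init w.1, good_init w.2.1, by
    intro hc
    refine w.2.1.2 (Fin.last k) ⟨hc, ?_⟩
    rw [Fin.succ_last]
    exact w.2.2⟩
  invFun v := ⟨Fin.snoc v.1 0, good_snoc v.2.1 (fun _ => v.2.2), Fin.snoc_last _ _⟩
  left_inv w := Subtype.ext (by
    have h := Fin.snoc_init_self w.1
    rw [w.2.2] at h
    exact h)
  right_inv v := Subtype.ext (Fin.init_snoc (α := fun _ : Fin (k+2) => Fin 3) _ _)

lemma A_succ : A (k+1) = U k + A k := by
  rw [A, card_split (fun w : Fin (k+2) → Fin 3 => good w ∧ w (Fin.last (k+1)) ≠ 2)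
    (fun w => w (Fin.last (k+1)) = 1)]
  congr 1
  · refine Nat.card_congr (Equiv.trans (Equiv.subtypeEquivRight (q := fun w =>
      good w ∧ w (Fin.last (k+1)) = 1) ?_) E1)
    · intro w
      constructor
      · rintro ⟨⟨hg, -⟩, h1⟩; exact ⟨hg, h1⟩
      · rintro ⟨hg, h1⟩; exact ⟨⟨hg, by rw [h1]; decide⟩, h1⟩
  · refine Nat.card_congr (Equiv.trans (Equiv.subtypeEquivRight (q := fun w =>
      good w ∧ w (Fin.last (k+1)) = 0) ?_) E0)
    · intro w
      constructor
      · rintro ⟨⟨hg, h2⟩, h1⟩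
        rcases fin3_cases (w (Fin.last (k+1))) with h | h | h
        · exact ⟨hg, h⟩
        · exact absurd h h1
        · exact absurd h h2
      · rintro ⟨hg, h0⟩
        exact ⟨⟨hg, by rw [h0]; decide⟩, by rw [h0]; decide⟩

lemma U_succ : U (k+1) = A k + 2 * U k := by
  rw [U, card_split (fun w : Fin (k+2) → Fin 3 => good w) (fun w => w (Fin.last (k+1)) = 1),
    card_split (fun w : Fin (k+2) → Fin 3 => good w ∧ ¬ w (Fin.last (k+1)) = 1)
    (fun w => w (Fin.last (k+1)) = 2)]
  have c1 : Nat.card {w : Fin (k+2) → Fin 3 // good w ∧ w (Fin.last (k+1)) = 1} = U k :=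
    Nat.card_congr E1
  have c2 : Nat.card {w : Fin (k+2) → Fin 3 //
      (good w ∧ ¬ w (Fin.last (k+1)) = 1) ∧ w (Fin.last (k+1)) = 2} = U k := by
    refine Nat.card_congr (Equiv.trans (Equiv.subtypeEquivRight (q := fun w =>
      good w ∧ w (Fin.last (k+1)) = 2) ?_) E2)
    intro w
    constructor
    · rintro ⟨⟨hg, -⟩, h2⟩; exact ⟨hg, h2⟩
    · rintro ⟨hg, h2⟩; exact ⟨⟨hg, by rw [h2]; decide⟩, h2⟩
  have c0 : Nat.card {w : Fin (k+2) → Fin 3 //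
      (good w ∧ ¬ w (Fin.last (k+1)) = 1) ∧ ¬ w (Fin.last (k+1)) = 2} = A k := by
    refine Nat.card_congr (Equiv.trans (Equiv.subtypeEquivRight (q := fun w =>
      good w ∧ w (Fin.last (k+1)) = 0) ?_) E0)
    intro w
    constructor
    · rintro ⟨⟨hg, h1⟩, h2⟩
      rcases fin3_cases (w (Fin.last (k+1))) with h | h | h
      · exact ⟨hg, h⟩
      · exact absurd h h1
      · exact absurd h h2
    · rintro ⟨hg, h0⟩
      exact ⟨⟨hg, by rw [h0]; decide⟩, by rw [h0]; decide⟩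
  rw [c1, c2, c0]
  ring

lemma A_zero : A 0 = 1 := by
  rw [A]
  have e : {w : Fin 1 → Fin 3 // good w ∧ w (Fin.last 0) ≠ 2} ≃
      {x : Fin 3 // x ≠ 0 ∧ x ≠ 2} := by
    refine Equiv.subtypeEquiv (Equiv.funUnique (Fin 1) (Fin 3)) ?_
    intro w
    show good w ∧ w (Fin.last 0) ≠ 2 ↔ w default ≠ 0 ∧ w default ≠ 2
    constructor
    · rintro ⟨⟨h0, -⟩, h2⟩; exact ⟨h0, h2⟩
    · rintro ⟨h0, h2⟩; exact ⟨⟨h0, fun i => i.elim0⟩, h2⟩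
  rw [Nat.card_congr e, Nat.card_eq_fintype_card]
  decide

lemma U_zero : U 0 = 2 := by
  rw [U]
  have e : {w : Fin 1 → Fin 3 // good w} ≃ {x : Fin 3 // x ≠ 0} := by
    refine Equiv.subtypeEquiv (Equiv.funUnique (Fin 1) (Fin 3)) ?_
    intro w
    show good w ↔ w default ≠ 0
    exact ⟨fun h => h.1, fun h => ⟨h, fun i => i.elim0⟩⟩
  rw [Nat.card_congr e, Nat.card_eq_fintype_card]
  decide

lemma AU_fib (k : ℕ) : A k = Nat.fib (2*k+2) ∧ U k = Nat.fib (2*k+3) := by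
  induction k with
  | zero =>
    constructor
    · rw [A_zero]; decide
    · rw [U_zero]; decide
  | succ k ih =>
    have f1 : Nat.fib (2*k+4) = Nat.fib (2*k+2) + Nat.fib (2*k+3) := by
      have h := Nat.fib_add_two (n := 2*k+2)
      have e1 : 2*k+2+2 = 2*k+4 := by ring
      have e2 : 2*k+2+1 = 2*k+3 := by ring
      rw [e1, e2] at h
      exact h
    have f2 : Nat.fib (2*k+5) = Nat.fib (2*k+3) + Nat.fib (2*k+4) := by
      have h := Nat.fib_add_two (n := 2*k+3)
      have e1 : 2*k+3+2 = 2*k+5 := by ring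
      have e2 : 2*k+3+1 = 2*k+4 := by ring
      rw [e1, e2] at h
      exact h
    constructor
    · rw [A_succ, ih.1, ih.2, show 2*(k+1)+2 = 2*k+4 from by ring]
      omega
    · rw [U_succ, ih.1, ih.2, show 2*(k+1)+3 = 2*k+5 from by ring]
      omega

lemma main (k : ℕ) : Nat.card (RSF k) = Nat.fib (2*k+2) := by
  rw [card_RSF, card_valid, (AU_fib k).1]

end Stmt8

/-- The path graph on `2n+1` vertices has `Φ_{4n+2}` rooted spanning
forests. -/
theorem stmt8 (n : ℕ) :
    rootedSpanningForestCard (SimpleGraph.pathGraph (2 * n + 1)) =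
      Nat.fib (4 * n + 2) := by
  rw [rootedSpanningForestCard]
  have h := Stmt8.main (2 * n)
  rw [show 2 * (2 * n) + 2 = 4 * n + 2 from by ring] at h
  exact h
end

section
/- For the cycle graph $C_m$ on $m \geq 3$ vertices, $\det(L(C_m) + I) = \Phi_{2m-1} + \Phi_{2m+1} - 2$, where $L(C_m)$ is the graph Laplacian and $\Phi_k$ is the $k$-th Fibonacci number with $\Phi_1 = \Phi_2 = 1$. -/
open Matrix Real Equiv goldenRatio

namespace Stmt10Aux

def P (n : ℕ) : Matrix (Fin (n+2)) (Fin (n+2)) ℝ :=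
  Matrix.of fun i j => if i = j + 1 then 1 else 0

lemma PtP (n : ℕ) : (P n)ᵀ * (P n) = 1 := by
  ext i j
  simp [Matrix.mul_apply, P, Matrix.transpose_apply, ite_mul, one_mul, zero_mul,
    Finset.sum_ite_eq', Matrix.one_apply, add_left_inj, eq_comm]

end Stmt10Aux

namespace Stmt10Aux

open Fin.NatCast Fin.CommRing in
lemma det_key (n : ℕ) (c : ℝ) :
    (c • (1 : Matrix (Fin (n+2)) (Fin (n+2)) ℝ) - P n).det = c ^ (n+2) - 1 := by
  classical
  set M := c • (1 : Matrix (Fin (n+2)) (Fin (n+2)) ℝ) - P n with hMdef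
  have hone : (1 : Fin (n+2)) ≠ 0 := by
    simp [Fin.ext_iff]
  have hM : ∀ a b : Fin (n+2), M a b
      = (if a = b then c else 0) - (if a = b + 1 then 1 else 0) := by
    intro a b
    simp [hMdef, P, Matrix.sub_apply, Matrix.smul_apply, Matrix.one_apply, smul_eq_mul,
      mul_ite, mul_one, mul_zero]
  have hrot : ∀ i : Fin (n+2), finRotate (n+2) i = i + 1 := fun i => finRotate_succ_apply i
  have hne : (1 : Perm (Fin (n+2))) ≠ finRotate (n+2) := by
    intro h
    have h0 := congrArg (fun σ : Perm (Fin (n+2)) => σ 0) h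
    simp only [Perm.one_apply, hrot] at h0
    exact hone (by simpa using h0.symm)
  have e1 : ∀ i : Fin (n+2), M i i = c := by
    intro i
    rw [hM]
    have : i ≠ i + 1 := fun h => hone (left_eq_add.mp h)
    simp [this]
  have e2 : ∀ i : Fin (n+2), M (i + 1) i = -1 := by
    intro i
    rw [hM]
    have : i + 1 ≠ i := fun h => hone (left_eq_add.mp h.symm)
    simp [this]
  rw [Matrix.det_apply']
  rw [← Finset.sum_subset (Finset.subset_univ ({1, finRotate (n+2)} : Finset (Perm (Fin (n+2)))))]
  · rw [Finset.sum_pair hne]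
    have hterm1 : ∏ i, M ((1 : Perm (Fin (n+2))) i) i = c ^ (n+2) := by
      simp only [Perm.one_apply, e1]
      simp
    have hterm2 : ∏ i, M (finRotate (n+2) i) i = (-1 : ℝ) ^ (n+2) := by
      simp only [hrot, e2]
      simp
    rw [hterm1, hterm2, Equiv.Perm.sign_one, sign_finRotate]
    push_cast
    rw [one_mul, ← pow_add]
    have hodd : Odd ((n+1) + (n+2)) := ⟨n + 1, by ring⟩
    rw [hodd.neg_one_pow]
    ring
  · intro σ _ hσ
    simp only [Finset.mem_insert, Finset.mem_singleton, not_or] at hσ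
    obtain ⟨h1, h2⟩ := hσ
    suffices h : ∃ i, M (σ i) i = 0 by
      obtain ⟨i, hi⟩ := h
      exact mul_eq_zero_of_right _
        (Finset.prod_eq_zero (f := fun j => M (σ j) j) (Finset.mem_univ i) hi)
    by_contra hc
    push_neg at hc
    have hcases : ∀ i, σ i = i ∨ σ i = i + 1 := by
      intro i
      by_contra hi
      push_neg at hi
      apply hc i
      rw [hM]
      simp [hi.1, hi.2]
    by_cases hid : ∀ i, σ i = i
    · exact h1 (Equiv.ext hid)
    · push_neg at hid
      obtain ⟨i₀, hi₀⟩ := hid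
      have hi₀' : σ i₀ = i₀ + 1 := (hcases i₀).resolve_left hi₀
      have hstep : ∀ k : ℕ, σ (i₀ + (k : Fin (n+2))) = i₀ + (k : Fin (n+2)) + 1 := by
        intro k
        induction k with
        | zero => simpa using hi₀'
        | succ k ih =>
          have hcast : ((k+1 : ℕ) : Fin (n+2)) = (k : Fin (n+2)) + 1 := by
            push_cast; ring
          rw [hcast]
          rcases hcases (i₀ + ((k : Fin (n+2)) + 1)) with h | h
          · exfalso
            have hinj : i₀ + ((k : Fin (n+2)) + 1) = i₀ + (k : Fin (n+2)) :=
              σ.injective (by rw [h, ih, add_assoc])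
            have hk := add_left_cancel hinj
            exact hone (left_eq_add.mp hk.symm)
          · rw [h, ← add_assoc]
      exfalso
      apply h2
      apply Equiv.ext
      intro j
      have h := hstep ((j - i₀).val)
      rw [Fin.cast_val_eq_self] at h
      have hj : i₀ + (j - i₀) = j := by ring
      rw [hj] at h
      exact h.trans (hrot j).symm

lemma detP (n : ℕ) : (P n).det = (-1 : ℝ)^(n+1) := by
  have h := det_key n 0
  rw [zero_smul, zero_sub, Matrix.det_neg, Fintype.card_fin] at h
  rw [zero_pow (by omega), zero_sub] at h
  have h2 : ((-1:ℝ)^(n+2)) * ((-1:ℝ)^(n+2)) = 1 := by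
    rw [← pow_add]
    exact Even.neg_one_pow ⟨n+2, by ring⟩
  have hd : (P n).det = (-1:ℝ)^(n+2) * -1 := by
    calc (P n).det = ((-1:ℝ)^(n+2) * (-1)^(n+2)) * (P n).det := by rw [h2, one_mul]
      _ = (-1)^(n+2) * ((-1)^(n+2) * (P n).det) := by ring
      _ = (-1)^(n+2) * -1 := by rw [h]
  rw [hd, pow_succ]
  ring

lemma hsum2 : (φ:ℝ)^2 + ψ^2 = 3 := by
  nlinarith [goldenRatio_add_goldenConj, goldenRatio_mul_goldenConj]

lemma hprod2 : (φ:ℝ)^2 * ψ^2 = 1 := by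
  rw [← mul_pow, goldenRatio_mul_goldenConj]; norm_num

lemma hfact (n : ℕ) :
    ((3:ℝ) • 1 - P n - (P n)ᵀ) * P n
      = -((φ^2 • (1 : Matrix (Fin (n+2)) (Fin (n+2)) ℝ) - P n) * (ψ^2 • 1 - P n)) := by
  simp only [sub_mul, mul_sub, smul_mul_assoc, mul_smul_comm, Matrix.one_mul,
    Matrix.mul_one, smul_smul, PtP]
  have h5 : (Real.sqrt 5)^2 = 5 := Real.sq_sqrt (by norm_num)
  match_scalars
  · linear_combination hsum2 - h5
  · norm_num
  · linear_combination -hprod2 + (1/8 : ℝ) * (Real.sqrt 5 ^ 2 + 3) * h5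

end Stmt10Aux

namespace Stmt10Aux

lemma hmap (k : ℕ) :
    (Int.castRingHom ℝ).mapMatrix ((SimpleGraph.cycleGraph (k+3)).lapMatrix ℤ + 1)
      = (3:ℝ) • 1 - P (k+1) - (P (k+1))ᵀ := by
  have hone : ∀ i : Fin (k+3), i ≠ i + 1 := by
    intro i h
    have h3 := left_eq_add.mp h
    have hval := congrArg Fin.val h3
    simp [Fin.val_one] at hval
  have hnb : ∀ i j : Fin (k+3), i = j + 1 → j = i + 1 → False := by
    intro i j h1 h2
    rw [h2, add_assoc] at h1
    have h3 : (1 : Fin (k+3)) + 1 = 0 := left_eq_add.mp h1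
    have hval := congrArg Fin.val h3
    rw [Fin.val_add, Fin.val_one] at hval
    rw [Nat.mod_eq_of_lt (by omega)] at hval
    simp at hval
  ext i j
  have hadj : (SimpleGraph.cycleGraph (k+3)).Adj i j ↔ (i = j + 1 ∨ j = i + 1) := by
    rw [SimpleGraph.cycleGraph_adj]
    constructor
    · rintro (h | h)
      · exact Or.inl ((sub_eq_iff_eq_add.mp h).trans (add_comm 1 j))
      · exact Or.inr ((sub_eq_iff_eq_add.mp h).trans (add_comm 1 i))
    · rintro (h | h)
      · exact Or.inl (sub_eq_iff_eq_add.mpr (h.trans (add_comm j 1)))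
      · exact Or.inr (sub_eq_iff_eq_add.mpr (h.trans (add_comm i 1)))
  simp only [RingHom.mapMatrix_apply, Matrix.map_apply, Matrix.add_apply,
    SimpleGraph.lapMatrix, Matrix.sub_apply, SimpleGraph.degMatrix,
    Matrix.diagonal_apply, SimpleGraph.adjMatrix_apply, Matrix.smul_apply,
    Matrix.transpose_apply, P, Matrix.of_apply, Matrix.one_apply, smul_eq_mul]
  by_cases hij : i = j
  · subst hij
    have h2 : ¬ (SimpleGraph.cycleGraph (k+3)).Adj i i := SimpleGraph.irrefl _
    simp [hone i, h2, SimpleGraph.cycleGraph_degree_three_le]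
  · by_cases hc1 : i = j + 1
    · have hc2 : ¬ j = i + 1 := fun h => hnb i j hc1 h
      have hA : (SimpleGraph.cycleGraph (k+3)).Adj i j := hadj.mpr (Or.inl hc1)
      simp only [eq_false hij, eq_true hA, eq_true hc1, eq_false hc2, if_true, if_false]
      norm_num
    · by_cases hc2 : j = i + 1
      · have hA : (SimpleGraph.cycleGraph (k+3)).Adj i j := hadj.mpr (Or.inr hc2)
        simp only [eq_false hij, eq_true hA, eq_false hc1, eq_true hc2, if_true, if_false]
        norm_num
      · have hA : ¬ (SimpleGraph.cycleGraph (k+3)).Adj i j := fun h =>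
          (hadj.mp h).elim hc1 hc2
        simp only [eq_false hij, eq_false hA, eq_false hc1, eq_false hc2, if_false]
        norm_num

end Stmt10Aux

namespace Stmt10Aux

lemma hfib (k : ℕ) :
    (Nat.fib (2*(k+3) - 1) : ℝ) + (Nat.fib (2*(k+3)+1) : ℝ)
      = φ^(2*(k+3)) + ψ^(2*(k+3)) := by
  have h1 : 2*(k+3) - 1 = 2*k + 5 := by omega
  have h2 : 2*(k+3) + 1 = 2*k + 7 := by omega
  have h3 : 2*(k+3) = 2*k + 6 := by omega
  obtain ⟨K, hK⟩ : ∃ K, 2*k+5 = K := ⟨_, rfl⟩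
  have h2' : 2*k+7 = K + 2 := by omega
  have h3' : 2*k+6 = K + 1 := by omega
  rw [h1, h2, h3, hK, h2', h3', Real.coe_fib_eq, Real.coe_fib_eq]
  have h5 : (Real.sqrt 5)^2 = 5 := Real.sq_sqrt (by norm_num)
  have h5' : Real.sqrt 5 ≠ 0 := by positivity
  have hφ : 1 + φ^2 = Real.sqrt 5 * φ := by linear_combination (-1/4 : ℝ) * h5
  have hψ : 1 + ψ^2 = -(Real.sqrt 5 * ψ) := by linear_combination (-1/4 : ℝ) * h5
  set x := (goldenRatio : ℝ) with hx
  set y := (goldenConj : ℝ) with hy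
  clear_value x y
  field_simp
  linear_combination (x^K : ℝ) * hφ - (y^K : ℝ) * hψ

end Stmt10Aux

open Stmt10Aux

/-- For the cycle graph `C_m` on `m ≥ 3` vertices,
`det(L(C_m) + I) = Φ_{2m-1} + Φ_{2m+1} - 2`. -/
theorem stmt10 (m : ℕ) (hm : 3 ≤ m) :
    (((SimpleGraph.cycleGraph m).lapMatrix ℤ) + 1).det =
      (Nat.fib (2 * m - 1) : ℤ) + (Nat.fib (2 * m + 1) : ℤ) - 2 := by
  obtain ⟨k, rfl⟩ : ∃ k, m = k + 3 := ⟨m - 3, by omega⟩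
  have hdetmap := (Int.castRingHom ℝ).map_det ((SimpleGraph.cycleGraph (k+3)).lapMatrix ℤ + 1)
  rw [hmap k] at hdetmap
  set D := (((3:ℝ) • 1 - P (k+1) - (P (k+1))ᵀ :
      Matrix (Fin (k+3)) (Fin (k+3)) ℝ)).det with hD
  have hf := congrArg Matrix.det (hfact (k+1))
  rw [Matrix.det_mul, Matrix.det_neg, Matrix.det_mul, det_key (k+1) (goldenRatio^2),
    det_key (k+1) (goldenConj^2), detP (k+1), Fintype.card_fin] at hf
  have hsq : ((-1:ℝ)^(k+2)) * ((-1:ℝ)^(k+2)) = 1 := by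
    rw [← pow_add]; exact Even.neg_one_pow ⟨k+2, by ring⟩
  have hsign : ((-1:ℝ)^(k+3)) * (-1)^(k+2) = -1 := by
    rw [← pow_add]; exact Odd.neg_one_pow ⟨k+2, by ring⟩
  have hphipsi : ((φ^2)^(k+3) : ℝ) * (ψ^2)^(k+3) = 1 := by
    rw [← mul_pow, hprod2, one_pow]
  have hD' : D = ((-1:ℝ)^(k+3) * ((φ^2)^(k+3) - 1) * ((ψ^2)^(k+3) - 1)) * (-1)^(k+2) := by
    calc D = D * ((-1)^(k+2) * (-1)^(k+2)) := by rw [hsq, mul_one]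
      _ = (D * (-1)^(k+2)) * (-1)^(k+2) := by ring
      _ = _ := by rw [hf]; ring
  have hDval : D = ((φ^2)^(k+3) : ℝ) + (ψ^2)^(k+3) - 2 := by
    have h := hD'
    have h2 : D = ((-1:ℝ)^(k+3) * (-1)^(k+2)) * (((φ^2)^(k+3) - 1) * ((ψ^2)^(k+3) - 1)) := by
      rw [h]; ring
    rw [hsign] at h2
    rw [h2]; linear_combination -hphipsi
  have hcast : ((((SimpleGraph.cycleGraph (k+3)).lapMatrix ℤ + 1).det : ℤ) : ℝ) = D := hdetmap
  have hfinal : ((((SimpleGraph.cycleGraph (k+3)).lapMatrix ℤ + 1).det : ℤ) : ℝ)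
      = (Nat.fib (2*(k+3) - 1) : ℝ) + (Nat.fib (2*(k+3)+1) : ℝ) - 2 := by
    rw [hcast, hDval]
    calc ((φ^2)^(k+3) : ℝ) + (ψ^2)^(k+3) - 2 = φ^(2*(k+3)) + ψ^(2*(k+3)) - 2 := by
          rw [pow_mul, pow_mul]
      _ = _ := by rw [← hfib k]
  exact_mod_cast hfinal
end

section
/- Let $G$ be a finite $2$-connected plane graph. Define the almost-tree spin graph $\widehat{G}_{aT}$ whose vertices are the spanning almost-trees of $G$ (spanning forests obtained by deleting exactly one edge from a spanning tree, equivalently spanning forests with exactly two connected components) and whose edges connect two almost-trees related by a leaf spin (removing a leaf edge of the subgraph that is not a leaf of $G$ and replacing it with another edge of $G$ incident to the same degree-one endpoint). Then $\widehat{G}_{aT}$ is connected. -/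
/-- A spanning almost-tree of `G`: a spanning forest (edge set `F`) with exactly two
connected components, i.e. a spanning tree with one edge removed. -/
def IsAlmostTree {V : Type*} [Fintype V] (G : SimpleGraph V) (F : Set (Sym2 V)) : Prop :=
  F ⊆ G.edgeSet ∧ (SimpleGraph.fromEdgeSet F).IsAcyclic ∧
    Nat.card ((SimpleGraph.fromEdgeSet F).ConnectedComponent) = 2

/-- A leaf spin: remove a leaf edge `e` of the subgraph `F` (its endpoint `v` has degree
one in `F`) and replace it with another edge `e'` of `G` incident to `v`. -/
def LeafSpin {V : Type*} [Fintype V] (G : SimpleGraph V) (F F' : Set (Sym2 V)) : Prop :=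
  ∃ (e e' : Sym2 V) (v : V), e ∈ F ∧ v ∈ e ∧
    Nat.card ((SimpleGraph.fromEdgeSet F).neighborSet v) = 1 ∧
    v ∈ e' ∧ e' ∈ G.edgeSet ∧ e' ∉ F ∧ F' = insert e' (F \ {e})


namespace StmtTwelve
open SimpleGraph
section
set_option linter.unusedSectionVars false
set_option linter.unusedVariables false
set_option maxHeartbeats 1600000
variable {V : Type*} [Fintype V] {G : SimpleGraph V}




/-- Reachability in the graph spanned by an edge set. -/
def Cn (F : Set (Sym2 V)) (a b : V) : Prop := (SimpleGraph.fromEdgeSet F).Reachable a b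

lemma Cn.refl (F : Set (Sym2 V)) (a : V) : Cn F a a := Reachable.refl a

lemma Cn.symm {F : Set (Sym2 V)} {a b : V} (h : Cn F a b) : Cn F b a := Reachable.symm h

lemma Cn.trans {F : Set (Sym2 V)} {a b c : V} (h : Cn F a b) (h' : Cn F b c) : Cn F a c :=
  Reachable.trans h h'

lemma cn_of_mem {F : Set (Sym2 V)} {a b : V} (h : s(a,b) ∈ F) (hne : a ≠ b) : Cn F a b :=
  ((SimpleGraph.fromEdgeSet_adj F).2 ⟨h, hne⟩).reachable

lemma cn_of_eq {F : Set (Sym2 V)} {a b : V} (h : a = b) : Cn F a b := by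
  subst h; exact Cn.refl _ _

lemma cn_mono {F F' : Set (Sym2 V)} (h : F ⊆ F') {a b : V} (hc : Cn F a b) : Cn F' a b :=
  Reachable.mono (SimpleGraph.fromEdgeSet_mono h) hc

/-- Splitting reachability at an edge. -/
lemma cn_split_edge {F : Set (Sym2 V)} {x y p q : V} (e : Sym2 V) (he : e = s(p,q))
    (h : Cn F x y) :
    Cn (F \ {e}) x y ∨ (Cn (F \ {e}) x p ∧ Cn (F \ {e}) q y) ∨
      (Cn (F \ {e}) x q ∧ Cn (F \ {e}) p y) := by
  obtain ⟨w⟩ := h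
  induction w with
  | nil => exact Or.inl (Cn.refl _ _)
  | @cons a c y h w ih =>
    rw [SimpleGraph.fromEdgeSet_adj] at h
    obtain ⟨hmem, hne⟩ := h
    by_cases hee : s(a,c) = e
    · rw [he, Sym2.eq_iff] at hee
      rcases hee with ⟨hap, hcq⟩ | ⟨haq, hcp⟩
      · -- a = p, c = q
        rcases ih with h1 | ⟨h1, h2⟩ | ⟨h1, h2⟩
        · exact Or.inr (Or.inl ⟨cn_of_eq hap, (cn_of_eq hcq.symm).trans h1⟩)
        · exact Or.inr (Or.inl ⟨cn_of_eq hap, h2⟩)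
        · exact Or.inl ((cn_of_eq hap).trans h2)
      · -- a = q, c = p
        rcases ih with h1 | ⟨h1, h2⟩ | ⟨h1, h2⟩
        · exact Or.inr (Or.inr ⟨cn_of_eq haq, (cn_of_eq hcp.symm).trans h1⟩)
        · exact Or.inl ((cn_of_eq haq).trans h2)
        · exact Or.inr (Or.inr ⟨cn_of_eq haq, h2⟩)
    · have hac : Cn (F \ {e}) a c := cn_of_mem (Set.mem_diff_singleton.2 ⟨hmem, hee⟩) hne
      rcases ih with h1 | ⟨h1, h2⟩ | ⟨h1, h2⟩
      · exact Or.inl (hac.trans h1)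
      · exact Or.inr (Or.inl ⟨hac.trans h1, h2⟩)
      · exact Or.inr (Or.inr ⟨hac.trans h1, h2⟩)

/-- Edges of `F` incident to `v` removed. -/
def Fm (F : Set (Sym2 V)) (v : V) : Set (Sym2 V) := {e ∈ F | v ∉ e}

lemma Fm_subset (F : Set (Sym2 V)) (v : V) : Fm F v ⊆ F := fun _ h => h.1

/-- Splitting reachability at a vertex. -/
lemma cn_split_vertex {F : Set (Sym2 V)} {x y : V} (v : V) (h : Cn F x y) :
    Cn (Fm F v) x y ∨ (Cn F x v ∧ Cn F v y) := by
  obtain ⟨w⟩ := h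
  induction w with
  | nil => exact Or.inl (Cn.refl _ _)
  | @cons a c y h w ih =>
    rw [SimpleGraph.fromEdgeSet_adj] at h
    obtain ⟨hmem, hne⟩ := h
    have hac : Cn F a c := cn_of_mem hmem hne
    have hcy : Cn F c y := ⟨w⟩
    by_cases hx : a = v
    · exact Or.inr ⟨hx ▸ Cn.refl _ _, hx ▸ (hac.trans hcy)⟩
    · by_cases hz : c = v
      · exact Or.inr ⟨hz ▸ hac, hz ▸ hcy⟩
      · rcases ih with h1 | ⟨h1, h2⟩
        · refine Or.inl ((cn_of_mem (show s(a,c) ∈ Fm F v from ⟨hmem, ?_⟩) hne).trans h1)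
          rw [Sym2.mem_iff]
          rintro (rfl | rfl)
          · exact hx rfl
          · exact hz rfl
        · exact Or.inr ⟨hac.trans h1, h2⟩

lemma cn_isolated {F : Set (Sym2 V)} {v : V} (h : ∀ e ∈ F, v ∉ e) {z : V}
    (hc : Cn F v z) : z = v := by
  obtain ⟨w⟩ := hc
  cases w with
  | nil => rfl
  | cons h' w =>
    rw [SimpleGraph.fromEdgeSet_adj] at h'
    exact absurd (Sym2.mem_mk_left _ _) (h _ h'.1)




lemma cn_insert_iff {F : Set (Sym2 V)} {p q : V} (hpq : p ≠ q) (x y : V) :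
    Cn (insert s(p,q) F) x y ↔
      Cn F x y ∨ (Cn F x p ∧ Cn F q y) ∨ (Cn F x q ∧ Cn F p y) := by
  constructor
  · intro h
    have h' := cn_split_edge (F := insert s(p,q) F) s(p,q) rfl h
    have hsub : insert s(p,q) F \ {s(p,q)} ⊆ F := by
      intro e he
      rcases he with ⟨he1, he2⟩
      rcases Set.mem_insert_iff.1 he1 with h | h
      · exact absurd h he2
      · exact h
    rcases h' with h1 | ⟨h1, h2⟩ | ⟨h1, h2⟩
    · exact Or.inl (cn_mono hsub h1)
    · exact Or.inr (Or.inl ⟨cn_mono hsub h1, cn_mono hsub h2⟩)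
    · exact Or.inr (Or.inr ⟨cn_mono hsub h1, cn_mono hsub h2⟩)
  · intro h
    have hmem : s(p,q) ∈ insert s(p,q) F := Set.mem_insert _ _
    have hedge : Cn (insert s(p,q) F) p q := cn_of_mem hmem hpq
    have hsub : F ⊆ insert s(p,q) F := Set.subset_insert _ _
    rcases h with h1 | ⟨h1, h2⟩ | ⟨h1, h2⟩
    · exact cn_mono hsub h1
    · exact ((cn_mono hsub h1).trans hedge).trans (cn_mono hsub h2)
    · exact ((cn_mono hsub h1).trans hedge.symm).trans (cn_mono hsub h2)

/-- `v` is a leaf of `F` with unique incident edge `s(v,u)`. -/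
def IsLeafAt (F : Set (Sym2 V)) (v u : V) : Prop :=
  s(v,u) ∈ F ∧ v ≠ u ∧ ∀ e ∈ F, v ∈ e → e = s(v,u)

lemma isLeafAt_iff_neighborSet {F : Set (Sym2 V)} (hnd : ∀ e ∈ F, ¬ e.IsDiag) {v u : V} :
    IsLeafAt F v u ↔ (SimpleGraph.fromEdgeSet F).neighborSet v = {u} := by
  constructor
  · rintro ⟨hmem, hne, huniq⟩
    ext z
    simp only [mem_neighborSet, fromEdgeSet_adj, Set.mem_singleton_iff]
    constructor
    · rintro ⟨hz, hvz⟩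
      have := huniq _ hz (Sym2.mem_mk_left _ _)
      rw [Sym2.congr_right] at this
      exact this
    · rintro rfl
      exact ⟨hmem, hne⟩
  · intro h
    have hu : (SimpleGraph.fromEdgeSet F).Adj v u := by
      have : u ∈ (SimpleGraph.fromEdgeSet F).neighborSet v := by rw [h]; rfl
      exact this
    rw [fromEdgeSet_adj] at hu
    refine ⟨hu.1, hu.2, ?_⟩
    intro e he hve
    obtain ⟨z, rfl⟩ := Sym2.mem_iff_exists.1 hve
    have hvz : v ≠ z := fun hv => (hnd _ he) (by rw [← hv]; rfl)
    have : z ∈ (SimpleGraph.fromEdgeSet F).neighborSet v := by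
      rw [mem_neighborSet, fromEdgeSet_adj]
      exact ⟨he, hvz⟩
    rw [h, Set.mem_singleton_iff] at this
    rw [this]

lemma natcard_neighborSet_eq_one_iff {F : Set (Sym2 V)} (hnd : ∀ e ∈ F, ¬ e.IsDiag) {v : V} :
    Nat.card ((SimpleGraph.fromEdgeSet F).neighborSet v) = 1 ↔ ∃ u, IsLeafAt F v u := by
  rw [Nat.card_coe_set_eq, Set.ncard_eq_one]
  constructor
  · rintro ⟨u, hu⟩
    exact ⟨u, (isLeafAt_iff_neighborSet hnd).2 hu⟩
  · rintro ⟨u, hu⟩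
    exact ⟨u, (isLeafAt_iff_neighborSet hnd).1 hu⟩

/-- Characterization of having exactly two connected components. -/
lemma twocomps_iff (F : Set (Sym2 V)) :
    Nat.card (SimpleGraph.fromEdgeSet F).ConnectedComponent = 2 ↔
      ∃ a b : V, ¬ Cn F a b ∧ ∀ x, Cn F x a ∨ Cn F x b := by
  rw [Nat.card_eq_two_iff]
  constructor
  · rintro ⟨x, y, hxy, huniv⟩
    obtain ⟨a, rfl⟩ := x.exists_rep
    obtain ⟨b, rfl⟩ := y.exists_rep
    refine ⟨a, b, ?_, ?_⟩
    · intro h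
      exact hxy (Quot.sound h)
    · intro z
      have : Quot.mk _ z ∈ ({Quot.mk _ a, Quot.mk _ b} : Set ((SimpleGraph.fromEdgeSet F).ConnectedComponent)) := by
        exact (Set.eq_univ_iff_forall.1 huniv) _
      rcases this with h | h
      · exact Or.inl ((SimpleGraph.ConnectedComponent.eq).1 h)
      · exact Or.inr ((SimpleGraph.ConnectedComponent.eq).1 h)
  · rintro ⟨a, b, hab, hall⟩
    refine ⟨Quot.mk _ a, Quot.mk _ b, ?_, ?_⟩
    · intro h
      exact hab ((SimpleGraph.ConnectedComponent.eq).1 h)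
    · apply Set.eq_univ_iff_forall.2
      intro c
      obtain ⟨z, rfl⟩ := c.exists_rep
      rcases hall z with h | h
      · exact Or.inl ((SimpleGraph.ConnectedComponent.eq).2 h)
      · exact Or.inr ((SimpleGraph.ConnectedComponent.eq).2 h)

lemma acyclic_mono {F F' : Set (Sym2 V)} (h : F ⊆ F')
    (hF' : (SimpleGraph.fromEdgeSet F').IsAcyclic) : (SimpleGraph.fromEdgeSet F).IsAcyclic := by
  intro v c hc
  exact hF' (c.mapLe (SimpleGraph.fromEdgeSet_mono h)) (hc.mapLe _)



lemma edgeSet_eq {F : Set (Sym2 V)} (hnd : ∀ e ∈ F, ¬ e.IsDiag) :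
    (SimpleGraph.fromEdgeSet F).edgeSet = F := by
  rw [SimpleGraph.edgeSet_fromEdgeSet]
  ext e
  simp only [Set.mem_diff, Set.mem_setOf_eq]
  exact ⟨fun h => h.1, fun h => ⟨h, hnd e h⟩⟩

lemma bridge_iff_cn {F : Set (Sym2 V)} {p q : V} (hmem : s(p,q) ∈ F) (hne : p ≠ q) :
    (SimpleGraph.fromEdgeSet F).IsBridge s(p,q) ↔ ¬ Cn (F \ {s(p,q)}) p q := by
  rw [SimpleGraph.isBridge_iff]
  have : (SimpleGraph.fromEdgeSet F) \ SimpleGraph.fromEdgeSet {s(p,q)}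
      = SimpleGraph.fromEdgeSet (F \ {s(p,q)}) := (SimpleGraph.fromEdgeSet_sdiff _ _).symm
  rw [SimpleGraph.deleteEdges_fromEdgeSet]
  exact Iff.rfl

/-- In an acyclic graph without the vertex `v`, attaching a pendant edge at isolated `v`
keeps it acyclic. -/
lemma acyclic_insert_pendant {F : Set (Sym2 V)} (hF : (SimpleGraph.fromEdgeSet F).IsAcyclic)
    (hnd : ∀ e ∈ F, ¬ e.IsDiag) {v w : V} (hvw : v ≠ w) (hiso : ∀ e ∈ F, v ∉ e) :
    (SimpleGraph.fromEdgeSet (insert s(v,w) F)).IsAcyclic := by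
  have hnd' : ∀ e ∈ insert s(v,w) F, ¬ e.IsDiag := by
    rintro e (rfl | he)
    · simpa using hvw
    · exact hnd e he
  rw [SimpleGraph.isAcyclic_iff_forall_edge_isBridge]
  intro e he
  rw [edgeSet_eq hnd'] at he
  induction e with
  | _ p q =>
    have hne : p ≠ q := by
      intro h; exact hnd' _ he (by rw [h]; rfl)
    rw [bridge_iff_cn he hne]
    rcases Set.mem_insert_iff.1 he with hevw | heF
    · -- e = s(v,w)
      intro hcn
      have hsub : insert s(v,w) F \ {s(p,q)} ⊆ F := by
        intro x hx
        rcases Set.mem_insert_iff.1 hx.1 with h | h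
        · exact absurd (h.trans hevw.symm) hx.2
        · exact h
      have := cn_mono hsub hcn
      -- p,q is v,w in some order; v is isolated in F
      rw [Sym2.eq_iff] at hevw
      rcases hevw with ⟨rfl, rfl⟩ | ⟨rfl, rfl⟩
      · exact hne (cn_isolated hiso this).symm
      · exact hne (cn_isolated hiso this.symm)
    · -- e ∈ F
      intro hcn
      have hvpq : v ∉ s(p,q) := hiso _ heF
      have hEq : insert s(v,w) F \ {s(p,q)} = insert s(v,w) (F \ {s(p,q)}) := by
        rw [Set.insert_diff_of_notMem]
        simp only [Set.mem_singleton_iff]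
        intro h
        exact hvpq (by rw [← h]; exact Sym2.mem_mk_left _ _)
      rw [hEq, cn_insert_iff hvw] at hcn
      have hbr : ¬ Cn (F \ {s(p,q)}) p q := by
        have := (SimpleGraph.isAcyclic_iff_forall_edge_isBridge).1 hF
          (e := s(p,q)) (by rw [edgeSet_eq hnd]; exact heF)
        exact (bridge_iff_cn heF hne).1 this
      have hisod : ∀ e ∈ F \ {s(p,q)}, v ∉ e := fun e he => hiso e he.1
      rcases hcn with h1 | ⟨h1, h2⟩ | ⟨h1, h2⟩
      · exact hbr h1
      · -- Cn (F\pq) p v : so p = v, but v ∉ s(p,q)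
        have := cn_isolated hisod h1.symm
        exact hvpq (by rw [← this]; exact Sym2.mem_mk_left _ _)
      · have := cn_isolated hisod h2
        exact hvpq (by rw [← this]; exact Sym2.mem_mk_right _ _)



lemma nd_of_sub_edgeSet {F : Set (Sym2 V)} (h : F ⊆ G.edgeSet) : ∀ e ∈ F, ¬ e.IsDiag :=
  fun e he => SimpleGraph.not_isDiag_of_mem_edgeSet G (h he)

theorem spin_good {F : Set (Sym2 V)} (hAT : IsAlmostTree G F) {v u w : V}
    (hleaf : IsLeafAt F v u) (hadj : G.Adj v w) (hwu : w ≠ u) :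
    IsAlmostTree G (insert s(v,w) (F \ {s(v,u)}))
    ∧ LeafSpin G F (insert s(v,w) (F \ {s(v,u)}))
    ∧ IsLeafAt (insert s(v,w) (F \ {s(v,u)})) v w := by
  obtain ⟨hsubG, hacy, hcomp⟩ := hAT
  obtain ⟨hvuF, hvu, huniq⟩ := hleaf
  have hnd : ∀ e ∈ F, ¬ e.IsDiag := nd_of_sub_edgeSet hsubG
  have hvw : v ≠ w := G.ne_of_adj hadj
  set e : Sym2 V := s(v,u) with he_def
  set e' : Sym2 V := s(v,w) with he'_def
  set F₀ : Set (Sym2 V) := F \ {e} with hF₀_def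
  have he'F : e' ∉ F := by
    intro h
    have := huniq _ h (Sym2.mem_mk_left _ _)
    rw [he'_def, he_def, Sym2.congr_right] at this
    exact hwu this
  have hiso : ∀ e'' ∈ F₀, v ∉ e'' := by
    rintro e'' ⟨heF, hne⟩ hv
    exact hne (huniq _ heF hv)
  have hnd₀ : ∀ e'' ∈ F₀, ¬ e''.IsDiag := fun e'' h => hnd _ h.1
  have hacy₀ : (SimpleGraph.fromEdgeSet F₀).IsAcyclic := acyclic_mono Set.diff_subset hacy
  have hacy' : (SimpleGraph.fromEdgeSet (insert e' F₀)).IsAcyclic :=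
    acyclic_insert_pendant hacy₀ hnd₀ hvw hiso
  have hCnvu : Cn F v u := cn_of_mem hvuF hvu
  -- transfer reachability from F to F₀ for vertices different from v
  have trans₀ : ∀ x y : V, x ≠ v → y ≠ v → Cn F x y → Cn F₀ x y := by
    intro x y hx hy h
    rcases cn_split_edge e he_def h with h1 | ⟨h1, h2⟩ | ⟨h1, h2⟩
    · exact h1
    · exact absurd (cn_isolated hiso h1.symm) hx
    · exact absurd (cn_isolated hiso h2) hy
  -- key component argument, for a fixed labeling of the two components
  have key : ∀ a b : V, ¬ Cn F a b → (∀ x, Cn F x a ∨ Cn F x b) → Cn F u b →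
      ∃ a' b' : V, ¬ Cn (insert e' F₀) a' b' ∧ ∀ x, Cn (insert e' F₀) x a' ∨ Cn (insert e' F₀) x b' := by
    intro a b hab hall hub
    have hav : a ≠ v := by
      rintro rfl
      exact hab (hCnvu.trans hub)
    have huv : u ≠ v := fun h => hvu h.symm
    have hsub₀ : F₀ ⊆ insert e' F₀ := Set.subset_insert _ _
    refine ⟨a, u, ?_, ?_⟩
    · intro h
      rw [he'_def, cn_insert_iff hvw] at h
      rcases h with h1 | ⟨h1, h2⟩ | ⟨h1, h2⟩
      · exact hab ((cn_mono Set.diff_subset h1).trans hub)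
      · exact hav (cn_isolated hiso h1.symm)
      · exact huv (cn_isolated hiso h2)
    · intro x
      by_cases hx : x = v
      · subst hx
        have hvw' : Cn (insert e' F₀) x w := cn_of_mem (Set.mem_insert _ _) hvw
        rcases hall w with hwa | hwb
        · exact Or.inl (hvw'.trans (cn_mono hsub₀ (trans₀ _ _ hvw.symm hav hwa)))
        · have : Cn F w u := hwb.trans hub.symm
          exact Or.inr (hvw'.trans (cn_mono hsub₀ (trans₀ _ _ hvw.symm huv this)))
      · rcases hall x with hxa | hxb
        · exact Or.inl (cn_mono hsub₀ (trans₀ _ _ hx hav hxa))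
        · exact Or.inr (cn_mono hsub₀ (trans₀ _ _ hx huv (hxb.trans hub.symm)))
  have hcomp' : Nat.card (SimpleGraph.fromEdgeSet (insert e' F₀)).ConnectedComponent = 2 := by
    rw [twocomps_iff]
    obtain ⟨a, b, hab, hall⟩ := (twocomps_iff F).1 hcomp
    rcases hall u with hua | hub
    · exact key b a (fun h => hab h.symm) (fun x => (hall x).symm) hua
    · exact key a b hab hall hub
  have hATnew : IsAlmostTree G (insert e' F₀) := by
    refine ⟨?_, hacy', hcomp'⟩
    intro x hx
    rcases Set.mem_insert_iff.1 hx with rfl | hxF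
    · exact hadj
    · exact hsubG hxF.1
  refine ⟨hATnew, ?_, ?_⟩
  · exact ⟨e, e', v, hvuF, Sym2.mem_mk_left _ _,
      (natcard_neighborSet_eq_one_iff hnd).2 ⟨u, hvuF, hvu, huniq⟩,
      Sym2.mem_mk_left _ _, hadj, he'F, rfl⟩
  · refine ⟨Set.mem_insert _ _, hvw, ?_⟩
    rintro e'' he'' hv
    rcases Set.mem_insert_iff.1 he'' with rfl | h
    · rfl
    · exact absurd hv (hiso _ h)

theorem spin_rev {F : Set (Sym2 V)} (hAT : IsAlmostTree G F) {v u w : V}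
    (hleaf : IsLeafAt F v u) (hadj : G.Adj v w) (hwu : w ≠ u)
    (hAT' : IsAlmostTree G (insert s(v,w) (F \ {s(v,u)})))
    (hleaf' : IsLeafAt (insert s(v,w) (F \ {s(v,u)})) v w) :
    LeafSpin G (insert s(v,w) (F \ {s(v,u)})) F := by
  obtain ⟨hvuF, hvu, huniq⟩ := hleaf
  have hvw : v ≠ w := G.ne_of_adj hadj
  have hne : s(v,u) ≠ s(v,w) := by
    rw [Ne, Sym2.congr_right]; exact fun h => hwu h.symm
  have he'F : s(v,w) ∉ F := by
    intro h
    have := huniq _ h (Sym2.mem_mk_left _ _)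
    rw [Sym2.congr_right] at this
    exact hwu this
  have heF' : s(v,u) ∉ insert s(v,w) (F \ {s(v,u)}) := by
    intro h
    rcases Set.mem_insert_iff.1 h with h | h
    · exact hne h
    · exact h.2 rfl
  refine ⟨s(v,w), s(v,u), v, Set.mem_insert _ _, Sym2.mem_mk_left _ _,
    (natcard_neighborSet_eq_one_iff (nd_of_sub_edgeSet hAT'.1)).2 ⟨w, hleaf'⟩,
    Sym2.mem_mk_left _ _, hAT.1 hvuF, heF', ?_⟩
  have h1 : insert s(v,w) (F \ {s(v,u)}) \ {s(v,w)} = F \ {s(v,u)} := by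
    rw [Set.insert_diff_self_of_notMem]
    rintro ⟨h, _⟩
    exact he'F h
  rw [h1, Set.insert_diff_singleton, Set.insert_eq_of_mem hvuF]


/-- (H1) removing the unique edge at `v` does not affect reachability of pairs away from `v`. -/
lemma cn_erase_leaf_iff {F : Set (Sym2 V)} {v u : V}
    (huniq : ∀ g ∈ F, v ∈ g → g = s(v,u)) {x y : V} (hx : x ≠ v) (hy : y ≠ v) :
    Cn (F \ {s(v,u)}) x y ↔ Cn F x y := by
  have hiso : ∀ g ∈ F \ {s(v,u)}, v ∉ g := by
    rintro g ⟨hg, hne⟩ hv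
    exact hne (huniq g hg hv)
  constructor
  · exact cn_mono Set.diff_subset
  · intro h
    rcases cn_split_edge (x := x) (y := y) s(v,u) rfl h with h1 | ⟨h1, h2⟩ | ⟨h1, h2⟩
    · exact h1
    · exact absurd (cn_isolated hiso h1.symm) hx
    · exact absurd (cn_isolated hiso h2) hy

/-- (H2) inserting a pendant edge at isolated `v` doesn't affect pairs away from `v`. -/
lemma cn_insert_pendant_iff {F : Set (Sym2 V)} {v w : V} (hvw : v ≠ w)
    (hiso : ∀ g ∈ F, v ∉ g) {x y : V} (hx : x ≠ v) (hy : y ≠ v) :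
    Cn (insert s(v,w) F) x y ↔ Cn F x y := by
  constructor
  · intro h
    rcases (cn_insert_iff hvw x y).1 h with h1 | ⟨h1, h2⟩ | ⟨h1, h2⟩
    · exact h1
    · exact absurd (cn_isolated hiso h1.symm) hx
    · exact absurd (cn_isolated hiso h2) hy
  · exact cn_mono (Set.subset_insert _ _)

/-- Transfer data for a sequence of moves whose spun vertices lie in `Z`. -/
structure Moved (Z : Set V) (F F' : Set (Sym2 V)) : Prop where
  cn : ∀ x y, x ∉ Z → y ∉ Z → (Cn F' x y ↔ Cn F x y)
  fm : ∀ o x y, x ∉ Z → y ∉ Z → (Cn (Fm F' o) x y ↔ Cn (Fm F o) x y)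
  edge : ∀ e : Sym2 V, (∀ z, z ∈ e → z ∉ Z) → (e ∈ F' ↔ e ∈ F)

lemma Moved.rfl {Z : Set V} {F : Set (Sym2 V)} : Moved Z F F :=
  ⟨fun _ _ _ _ => Iff.rfl, fun _ _ _ _ _ => Iff.rfl, fun _ _ => Iff.rfl⟩

lemma Moved.comp {Z : Set V} {F F' F'' : Set (Sym2 V)} (h : Moved Z F F') (h' : Moved Z F' F'') :
    Moved Z F F'' :=
  ⟨fun x y hx hy => (h'.cn x y hx hy).trans (h.cn x y hx hy),
   fun o x y hx hy => (h'.fm o x y hx hy).trans (h.fm o x y hx hy),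
   fun e he => (h'.edge e he).trans (h.edge e he)⟩

lemma Moved.mono {Z Z' : Set V} (hZ : Z ⊆ Z') {F F' : Set (Sym2 V)} (h : Moved Z F F') :
    Moved Z' F F' :=
  ⟨fun x y hx hy => h.cn x y (fun hh => hx (hZ hh)) (fun hh => hy (hZ hh)),
   fun o x y hx hy => h.fm o x y (fun hh => hx (hZ hh)) (fun hh => hy (hZ hh)),
   fun e he => h.edge e (fun z hz hzZ => he z hz (hZ hzZ))⟩

/-- A single spin at `v` is a `Moved {v}`. -/
lemma moved_spin {F : Set (Sym2 V)} {v u w : V} (hleaf : IsLeafAt F v u)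
    (hvw : v ≠ w) (hwu : w ≠ u) :
    Moved {v} F (insert s(v,w) (F \ {s(v,u)})) := by
  obtain ⟨hmem, hvu, huniq⟩ := hleaf
  have hiso₀ : ∀ g ∈ F \ {s(v,u)}, v ∉ g := by
    rintro g ⟨hg, hne⟩ hv
    exact hne (huniq g hg hv)
  constructor
  · intro x y hx hy
    rw [Set.mem_singleton_iff] at hx hy
    rw [cn_insert_pendant_iff hvw hiso₀ hx hy, cn_erase_leaf_iff huniq hx hy]
  · intro o x y hx hy
    rw [Set.mem_singleton_iff] at hx hy
    by_cases ho : o = v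
    · -- sets are equal
      subst ho
      have : Fm (insert s(o,w) (F \ {s(o,u)})) o = Fm F o := by
        ext g
        simp only [Fm, Set.mem_setOf_eq, Set.mem_insert_iff, Set.mem_diff,
          Set.mem_singleton_iff]
        constructor
        · rintro ⟨rfl | ⟨hg, hne⟩, hno⟩
          · exact absurd (Sym2.mem_mk_left _ _) hno
          · exact ⟨hg, hno⟩
        · rintro ⟨hg, hno⟩
          refine ⟨Or.inr ⟨hg, ?_⟩, hno⟩
          rintro rfl
          exact hno (Sym2.mem_mk_left _ _)
      rw [this]
    · -- o ≠ v
      have huniq' : ∀ g ∈ Fm F o, v ∈ g → g = s(v,u) := fun g hg => huniq g hg.1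
      have hiso' : ∀ g ∈ Fm F o \ {s(v,u)}, v ∉ g := by
        rintro g ⟨hg, hne⟩ hv
        exact hne (huniq' g hg hv)
      by_cases how : o = w
      · -- new edge contains o, so it is not in Fm; Fm F' o = (Fm F o) \ {s(v,u)}
        subst how
        have hset : Fm (insert s(v,o) (F \ {s(v,u)})) o = Fm F o \ {s(v,u)} := by
          ext g
          simp only [Fm, Set.mem_setOf_eq, Set.mem_insert_iff, Set.mem_diff,
            Set.mem_singleton_iff]
          constructor
          · rintro ⟨rfl | ⟨hg, hne⟩, hno⟩
            · exact absurd (Sym2.mem_mk_right _ _) hno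
            · exact ⟨⟨hg, hno⟩, hne⟩
          · rintro ⟨⟨hg, hno⟩, hne⟩
            exact ⟨Or.inr ⟨hg, hne⟩, hno⟩
        rw [hset, cn_erase_leaf_iff huniq' hx hy]
      · -- o ∉ {v, w}: Fm F' o = insert s(v,w) ((Fm F o) \ {s(v,u)})
        have hset : Fm (insert s(v,w) (F \ {s(v,u)})) o
            = insert s(v,w) (Fm F o \ {s(v,u)}) := by
          ext g
          simp only [Fm, Set.mem_setOf_eq, Set.mem_insert_iff, Set.mem_diff,
            Set.mem_singleton_iff]
          constructor
          · rintro ⟨rfl | ⟨hg, hne⟩, hno⟩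
            · exact Or.inl rfl
            · exact Or.inr ⟨⟨hg, hno⟩, hne⟩
          · rintro (rfl | ⟨⟨hg, hno⟩, hne⟩)
            · refine ⟨Or.inl rfl, ?_⟩
              rw [Sym2.mem_iff]
              rintro (rfl | rfl)
              · exact ho rfl
              · exact how rfl
            · exact ⟨Or.inr ⟨hg, hne⟩, hno⟩
        rw [hset, cn_insert_pendant_iff hvw hiso' hx hy, cn_erase_leaf_iff huniq' hx hy]
  · intro e he
    have hv : v ∉ e := fun h => he v h rfl
    simp only [Set.mem_insert_iff, Set.mem_diff, Set.mem_singleton_iff]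
    constructor
    · rintro (rfl | ⟨hg, _⟩)
      · exact absurd (Sym2.mem_mk_left _ _) hv
      · exact hg
    · intro hg
      refine Or.inr ⟨hg, ?_⟩
      rintro rfl
      exact hv (Sym2.mem_mk_left _ _)



/-- Connectivity within a vertex set `S`. -/
def WConn (G : SimpleGraph V) (S : Set V) (x y : V) : Prop :=
  ∃ w : G.Walk x y, ∀ z ∈ w.support, z ∈ S

lemma WConn.refl {S : Set V} {x : V} (hx : x ∈ S) : WConn G S x x :=
  ⟨Walk.nil, by simp [hx]⟩

lemma WConn.symm {S : Set V} {x y : V} (h : WConn G S x y) : WConn G S y x := by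
  obtain ⟨w, hw⟩ := h
  exact ⟨w.reverse, fun z hz => hw z (by rwa [Walk.support_reverse, List.mem_reverse] at hz)⟩

lemma WConn.trans {S : Set V} {x y z : V} (h : WConn G S x y) (h' : WConn G S y z) :
    WConn G S x z := by
  obtain ⟨w, hw⟩ := h
  obtain ⟨w', hw'⟩ := h'
  refine ⟨w.append w', fun t ht => ?_⟩
  rw [Walk.support_append, List.mem_append] at ht
  rcases ht with ht | ht
  · exact hw t ht
  · exact hw' t (List.mem_of_mem_tail ht)

lemma WConn.mono {S S' : Set V} (hsub : S ⊆ S') {x y : V} (h : WConn G S x y) :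
    WConn G S' x y := by
  obtain ⟨w, hw⟩ := h
  exact ⟨w, fun z hz => hsub (hw z hz)⟩

lemma WConn.mem_left {S : Set V} {x y : V} (h : WConn G S x y) : x ∈ S := by
  obtain ⟨w, hw⟩ := h
  exact hw x w.start_mem_support

lemma WConn.mem_right {S : Set V} {x y : V} (h : WConn G S x y) : y ∈ S :=
  h.symm.mem_left

lemma WConn.adj {S : Set V} {x y : V} (hx : x ∈ S) (hy : y ∈ S) (h : G.Adj x y) :
    WConn G S x y := by
  refine ⟨Walk.cons h Walk.nil, fun z hz => ?_⟩
  simp only [Walk.support_cons, Walk.support_nil, List.mem_cons, List.mem_singleton] at hz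
  rcases hz with rfl | rfl | h
  · exact hx
  · exact hy
  · exact absurd h List.not_mem_nil

/-- Any vertex on a walk within `S` is `WConn` to the start. -/
lemma wconn_of_mem_support {S : Set V} {x y : V} (w : G.Walk x y)
    (hw : ∀ z ∈ w.support, z ∈ S) {t : V} (ht : t ∈ w.support) : WConn G S x t := by
  classical
  exact ⟨w.takeUntil t ht, fun z hz => hw z (Walk.support_takeUntil_subset w ht hz)⟩

/-- Exit lemma: a walk from inside `S` to outside must cross the boundary. -/
lemma exit_lemma {S : Set V} {x y : V} (w : G.Walk x y) (hx : x ∈ S) (hy : y ∉ S) :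
    ∃ c t, c ∈ S ∧ t ∉ S ∧ G.Adj c t ∧ c ∈ w.support ∧ t ∈ w.support := by
  induction w with
  | nil => exact absurd hx hy
  | @cons a b y h w ih =>
    by_cases hb : b ∈ S
    · obtain ⟨c, t, h1, h2, h3, h4, h5⟩ := ih hb hy
      exact ⟨c, t, h1, h2, h3, by simp [Walk.support_cons, h4],
        by simp [Walk.support_cons, h5]⟩
    · refine ⟨a, b, hx, hb, h, ?_, ?_⟩
      · simp [Walk.support_cons]
      · simp only [Walk.support_cons, List.mem_cons]
        exact Or.inr w.start_mem_support

/-- Walk to `u`: last vertex before reaching `u`. -/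
lemma last_before {a u : V} (w : G.Walk a u) (ha : a ≠ u) :
    ∃ (d : V) (w' : G.Walk a d), G.Adj d u ∧ u ∉ w'.support ∧
      ∀ z ∈ w'.support, z ∈ w.support := by
  induction w with
  | nil => exact absurd rfl ha
  | @cons a b u h w ih =>
    by_cases hb : b = u
    · refine ⟨a, Walk.nil, hb ▸ h, ?_, ?_⟩
      · simpa using Ne.symm ha
      · intro z hz
        simp only [Walk.support_nil, List.mem_singleton] at hz
        subst hz
        exact Walk.start_mem_support _
    · obtain ⟨d, w', h1, h2, h3⟩ := ih hb
      refine ⟨d, Walk.cons h w', h1, ?_, ?_⟩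
      · simp only [Walk.support_cons, List.mem_cons]
        rintro (rfl | hu)
        · exact ha rfl
        · exact h2 hu
      · intro z hz
        simp only [Walk.support_cons, List.mem_cons] at hz ⊢
        rcases hz with rfl | hz
        · exact Or.inl rfl
        · exact Or.inr (h3 z hz)

/-- Usable form of 2-connectivity. -/
lemma h2_usable (h2conn : ∀ v : V, (((⊤ : G.Subgraph).deleteVerts {v}).coe).Connected)
    (v : V) {x y : V} (hx : x ≠ v) (hy : y ≠ v) : ∃ w : G.Walk x y, v ∉ w.support := by
  have hx' : x ∈ ((⊤ : G.Subgraph).deleteVerts {v}).verts := ⟨trivial, by simpa using hx⟩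
  have hy' : y ∈ ((⊤ : G.Subgraph).deleteVerts {v}).verts := ⟨trivial, by simpa using hy⟩
  obtain ⟨p⟩ := (h2conn v).preconnected ⟨x, hx'⟩ ⟨y, hy'⟩
  refine ⟨p.map (Subgraph.hom _), fun hv => ?_⟩
  have hv' := (Walk.support_map (Subgraph.hom _) p) ▸ hv
  rw [List.mem_map] at hv'
  obtain ⟨⟨z, hz⟩, _, hzz⟩ := hv'
  exact hz.2 (by simpa using hzz)

def SConn (G : SimpleGraph V) (S : Set V) : Prop := ∀ x ∈ S, ∀ y ∈ S, WConn G S x y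

def CompW (G : SimpleGraph V) (S : Set V) (z : V) : Set V := {y | WConn G S z y}

lemma compW_subset {S : Set V} {z : V} : CompW G S z ⊆ S := fun _ h => h.mem_right

/-- Main peel lemma. -/
lemma peel (hcon : G.Connected)
    (h2conn : ∀ v : V, (((⊤ : G.Subgraph).deleteVerts {v}).coe).Connected)
    (S : Set V) (hS : SConn G S) (hne : S.Nonempty) (hco : Sᶜ.Nonempty) :
    ∃ u ∈ S, (∃ q, q ∉ S ∧ G.Adj u q) ∧ SConn G (S \ {u}) := by
  obtain ⟨q₀, hq₀⟩ := hco
  -- first candidate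
  obtain ⟨s₀, hs₀⟩ := hne
  obtain ⟨w₀⟩ := hcon.preconnected s₀ q₀
  obtain ⟨u₀, t₀, hu₀S, ht₀, hadj₀, _, _⟩ := exit_lemma w₀ hs₀ hq₀
  -- if S \ {u₀} is empty, S = {u₀} and we are done
  by_cases hSu0 : ∀ x, x ∈ S → x = u₀
  · refine ⟨u₀, hu₀S, ⟨t₀, ht₀, hadj₀⟩, ?_⟩
    intro x hx
    exact absurd (hSu0 x hx.1) hx.2
  push_neg at hSu0
  obtain ⟨z₀, hz₀S, hz₀u⟩ := hSu0
  -- strong induction on the size of the component of a designated vertex z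
  suffices H : ∀ n (u z : V), u ∈ S → (∃ q, q ∉ S ∧ G.Adj u q) → z ∈ S \ {u} →
      (CompW G (S \ {u}) z).ncard ≤ n →
      ∃ u' ∈ S, (∃ q, q ∉ S ∧ G.Adj u' q) ∧ SConn G (S \ {u'}) by
    refine H (Fintype.card V) u₀ z₀ hu₀S ⟨t₀, ht₀, hadj₀⟩ ⟨hz₀S, by simpa using hz₀u⟩ ?_
    calc (CompW G (S \ {u₀}) z₀).ncard ≤ (Set.univ : Set V).ncard :=
          Set.ncard_le_ncard (Set.subset_univ _) (Set.toFinite _)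
      _ = Fintype.card V := by rw [Set.ncard_univ, Nat.card_eq_fintype_card]
  intro n
  induction n with
  | zero =>
    intro u z huS hq hzS hcard
    exfalso
    have : z ∈ CompW G (S \ {u}) z := WConn.refl hzS
    rw [Nat.le_zero, Set.ncard_eq_zero (Set.toFinite _)] at hcard
    rw [hcard] at this
    exact this
  | succ n ih =>
    intro u z huS hq hzS hcard
    by_cases hSu : SConn G (S \ {u})
    · exact ⟨u, huS, hq, hSu⟩
    set C := CompW G (S \ {u}) z with hC
    have hzC : z ∈ C := WConn.refl hzS
    have hzu : z ≠ u := fun h => hzS.2 (by simp [h])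
    have hq₀u : q₀ ≠ u := fun h => hq₀ (h ▸ huS)
    obtain ⟨wu, hwu⟩ := h2_usable h2conn u hzu hq₀u
    have hq₀C : q₀ ∉ C := fun h => hq₀ (compW_subset h).1
    obtain ⟨c, t, hcC, htC, hadj, hcsup, htsup⟩ := exit_lemma wu hzC hq₀C
    have htu : t ≠ u := fun h => hwu (h ▸ htsup)
    have hcS : c ∈ S := (compW_subset hcC).1
    have hcu : c ≠ u := fun h => (compW_subset hcC).2 (by simp [h])
    have htS : t ∉ S := by
      intro htS'
      exact htC (hcC.trans (WConn.adj (compW_subset hcC) ⟨htS', by simpa using htu⟩ hadj))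
    by_cases hSc : SConn G (S \ {c})
    · exact ⟨c, hcS, ⟨t, htS, hadj⟩, hSc⟩
    -- dichotomy
    have dich : ∀ y' ∈ S \ {c}, y' ∈ C \ {c} ∨ WConn G (S \ {c}) y' u := by
      rintro y' ⟨hy'S, hy'c⟩
      by_cases hy'u : y' = u
      · subst hy'u
        exact Or.inr (WConn.refl ⟨huS, by simpa using (Ne.symm hcu)⟩)
      by_cases hy'C : y' ∈ C
      · exact Or.inl ⟨hy'C, hy'c⟩
      · obtain ⟨w, hw⟩ := hS y' hy'S u huS
        obtain ⟨d, w', hdu, hu_sup, hsub⟩ := last_before w hy'u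
        have hw'S : ∀ x ∈ w'.support, x ∈ S \ {u} := by
          intro x hx
          refine ⟨hw x (hsub x hx), ?_⟩
          simp only [Set.mem_singleton_iff]
          rintro rfl
          exact hu_sup hx
        have hCavoid : ∀ x ∈ w'.support, x ∉ C := by
          intro x hx hxC
          exact hy'C (hxC.trans (wconn_of_mem_support w' hw'S hx).symm)
        have hw'Sc : ∀ x ∈ w'.support, x ∈ S \ {c} := by
          intro x hx
          refine ⟨(hw'S x hx).1, ?_⟩
          simp only [Set.mem_singleton_iff]
          rintro rfl
          exact hCavoid x hx hcC
        refine Or.inr (WConn.trans ⟨w', hw'Sc⟩ (WConn.adj ?_ ?_ hdu))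
        · exact hw'Sc d w'.end_mem_support
        · exact ⟨huS, by simpa using Ne.symm hcu⟩
    rw [SConn] at hSc
    push_neg at hSc
    obtain ⟨x₂, hx₂, y₂, hy₂, hxy₂⟩ := hSc
    have hz' : ∃ z', z' ∈ C \ {c} ∧ ¬ WConn G (S \ {c}) z' u := by
      by_cases hcu2 : WConn G (S \ {c}) x₂ u
      · by_cases hcu3 : WConn G (S \ {c}) y₂ u
        · exact absurd (hcu2.trans hcu3.symm) hxy₂
        · rcases dich y₂ hy₂ with h | h
          · exact ⟨y₂, h, hcu3⟩
          · exact absurd h hcu3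
      · rcases dich x₂ hx₂ with h | h
        · exact ⟨x₂, h, hcu2⟩
        · exact absurd h hcu2
    obtain ⟨z', ⟨hz'C, hz'c⟩, hz'u⟩ := hz'
    have hsub' : CompW G (S \ {c}) z' ⊆ C \ {c} := by
      intro y' hy'
      rcases dich y' (hy'.mem_right) with h | h
      · exact h
      · exact absurd (WConn.trans hy' h) hz'u
    have hz'S : z' ∈ S \ {c} := ⟨(compW_subset hz'C).1, hz'c⟩
    refine ih c z' hcS ⟨t, htS, hadj⟩ hz'S ?_
    calc (CompW G (S \ {c}) z').ncard ≤ (C \ {c}).ncard :=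
          Set.ncard_le_ncard hsub' (Set.toFinite _)
      _ = C.ncard - 1 := by
          rw [Set.ncard_diff_singleton_of_mem hcC]
      _ ≤ n := by
          have := hcard
          omega



/-- The subtype of almost-trees with the reachability relation. -/
def Rch (G : SimpleGraph V) (A B : {F : Set (Sym2 V) // IsAlmostTree G F}) : Prop :=
  Relation.ReflTransGen
    (fun A B : {F : Set (Sym2 V) // IsAlmostTree G F} => LeafSpin G A.1 B.1) A B

lemma Rch.refl {A : {F : Set (Sym2 V) // IsAlmostTree G F}} : Rch G A A :=
  Relation.ReflTransGen.refl

lemma Rch.trans {A B C : {F : Set (Sym2 V) // IsAlmostTree G F}}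
    (h : Rch G A B) (h' : Rch G B C) : Rch G A C :=
  Relation.ReflTransGen.trans h h'

/-- Mem of edge: first edge out of p towards a. -/
lemma cn_first_edge {F : Set (Sym2 V)} {p a : V} (h : Cn F p a) (hpa : p ≠ a) :
    ∃ z, s(p,z) ∈ F := by
  obtain ⟨w⟩ := h
  cases w with
  | nil => exact absurd rfl hpa
  | cons h w => exact ⟨_, ((SimpleGraph.fromEdgeSet_adj F).1 h).1⟩

lemma cn_leaf_step {W : Set (Sym2 V)} {p q a : V}
    (huniq : ∀ g ∈ W, p ∈ g → g = s(p,q)) (h : Cn W p a) (hpa : p ≠ a) : Cn W q a := by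
  obtain ⟨w⟩ := h
  cases w with
  | nil => exact absurd rfl hpa
  | @cons _ z _ h w =>
    have hz := huniq _ ((SimpleGraph.fromEdgeSet_adj W).1 h).1 (Sym2.mem_mk_left _ _)
    rw [Sym2.congr_right] at hz
    exact hz ▸ ⟨w⟩

/-- If all neighbours of `p` can reach `a` avoiding `p`, then `p` has at most one
neighbour (by acyclicity), i.e. it is a leaf. -/
lemma exists_leaf {F : Set (Sym2 V)} (hAT : IsAlmostTree G F) {p a : V} (hpa : p ≠ a)
    (hCn : Cn F p a) (hnb : ∀ z, s(p,z) ∈ F → z ≠ a → Cn (Fm F p) z a) :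
    ∃ pp, IsLeafAt F p pp := by
  have hnd : ∀ e ∈ F, ¬ e.IsDiag := fun e he => G.not_isDiag_of_mem_edgeSet (hAT.1 he)
  obtain ⟨z₀, hz₀⟩ := cn_first_edge hCn hpa
  have huniq : ∀ z, s(p,z) ∈ F → z = z₀ := by
    intro z₁ hz₁
    by_contra hne
    -- build a connection from p to z₀... use bridge on s(p,z₀)
    have hpz₀ : p ≠ z₀ := by
      intro h; exact hnd _ hz₀ (by rw [← h]; rfl)
    have hpz₁ : p ≠ z₁ := by
      intro h; exact hnd _ hz₁ (by rw [← h]; rfl)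
    have hFm_sub : Fm F p ⊆ F \ {s(p,z₀)} := by
      rintro g ⟨hg, hpg⟩
      exact ⟨hg, fun hh => hpg (by rw [hh]; exact Sym2.mem_mk_left _ _)⟩
    -- path from z₁ to z₀ avoiding p
    have key : Cn (Fm F p) z₁ z₀ := by
      by_cases h₁ : z₁ = a
      · by_cases h₀ : z₀ = a
        · rw [h₁, h₀]; exact Cn.refl _ _
        · exact (h₁ ▸ (hnb z₀ hz₀ h₀).symm : Cn (Fm F p) z₁ z₀)
      · by_cases h₀ : z₀ = a
        · exact h₀ ▸ (hnb z₁ hz₁ h₁)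
        · exact (hnb z₁ hz₁ h₁).trans (hnb z₀ hz₀ h₀).symm
    have hedge : s(p,z₁) ∈ F \ {s(p,z₀)} := by
      refine ⟨hz₁, fun hh => ?_⟩
      rw [Set.mem_singleton_iff, Sym2.congr_right] at hh
      exact hne hh
    have hcn' : Cn (F \ {s(p,z₀)}) p z₀ :=
      ((cn_of_mem hedge hpz₁).trans (cn_mono hFm_sub key))
    have hbridge := ((SimpleGraph.isAcyclic_iff_forall_edge_isBridge).1 hAT.2.1
      (e := s(p,z₀)) (by rw [edgeSet_eq hnd]; exact hz₀))
    exact (bridge_iff_cn hz₀ hpz₀).1 hbridge hcn'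
  refine ⟨z₀, hz₀, ?_, ?_⟩
  · intro h; exact hnd _ hz₀ (by rw [← h]; rfl)
  · intro e he hpe
    obtain ⟨z, rfl⟩ := Sym2.mem_iff_exists.1 hpe
    rw [huniq z he]

/-- The moving zone below `a` away from `o`. -/
def Bset (F : Set (Sym2 V)) (a o : V) : Set V :=
  {z | z ≠ a ∧ Cn (Fm F o) z a ∧ ¬ Cn (Fm F a) z o}

lemma not_mem_edge {a p z : V} (h1 : a ≠ p) (h2 : a ≠ z) : a ∉ s(p,z) := by
  rw [Sym2.mem_iff]
  rintro (rfl | rfl)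
  · exact h1 rfl
  · exact h2 rfl

lemma a_not_mem_Bset {F : Set (Sym2 V)} {a o : V} : a ∉ Bset F a o := fun h => h.1 rfl

lemma o_not_mem_Bset {F : Set (Sym2 V)} {a o : V} : o ∉ Bset F a o := by
  rintro ⟨h1, h2, h3⟩
  exact h3 (Cn.refl _ _)

lemma mem_Bset_ne_o {F : Set (Sym2 V)} {a o z : V} (h : z ∈ Bset F a o) :
    z ≠ o := fun hh => o_not_mem_Bset (hh ▸ h)

/-- Edges at a zone vertex stay in the zone (or go to `a`). -/
lemma bset_edge {F : Set (Sym2 V)} (hnd : ∀ e ∈ F, ¬ e.IsDiag) {a o p z : V}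
    (hao : a ≠ o) (hp : p ∈ Bset F a o) (hedge : s(p,z) ∈ F) (hza : z ≠ a) :
    z ∈ Bset F a o := by
  obtain ⟨hpa, hp1, hp2⟩ := hp
  have hpo : p ≠ o := mem_Bset_ne_o ⟨hpa, hp1, hp2⟩
  have hpz : p ≠ z := by
    intro h; exact hnd _ hedge (by rw [← h]; rfl)
  have hzo : z ≠ o := by
    rintro rfl
    have hin : s(p,z) ∈ Fm F a :=
      ⟨hedge, not_mem_edge (Ne.symm hpa) hao⟩
    exact hp2 (cn_of_mem hin hpz)
  refine ⟨hza, ?_, ?_⟩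
  · have hin : s(p,z) ∈ Fm F o := ⟨hedge, not_mem_edge (Ne.symm hpo) (Ne.symm hzo)⟩
    exact (cn_of_mem hin hpz).symm.trans hp1
  · intro h
    have hin : s(p,z) ∈ Fm F a := ⟨hedge, not_mem_edge (Ne.symm hpa) (Ne.symm hza)⟩
    exact hp2 ((cn_of_mem hin hpz).trans h)

lemma Fm_Fm_subset {F : Set (Sym2 V)} (a o : V) : Fm (Fm F a) o ⊆ Fm F o :=
  fun e he => ⟨he.1.1, he.2⟩

/-- Nested zones: the zone below `p ∈ Bset F a o` (oriented to `a`) is strictly inside. -/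
lemma bset_nested {F : Set (Sym2 V)} {a o p : V} (hao : a ≠ o) (hp : p ∈ Bset F a o) :
    Bset F p a ⊆ Bset F a o \ {p} := by
  rintro z ⟨hzp, h1, h2⟩
  have hza : z ≠ a := by
    rintro rfl
    exact h2 (Cn.refl _ _)
  refine ⟨⟨hza, ?_, ?_⟩, hzp⟩
  · rcases cn_split_vertex o h1 with h | ⟨_, hop⟩
    · exact (cn_mono (Fm_Fm_subset a o) h).trans hp.2.1
    · exact absurd hop.symm hp.2.2
  · intro h
    exact hp.2.2 (h1.symm.trans h)



lemma clear (h2conn : ∀ v : V, (((⊤ : G.Subgraph).deleteVerts {v}).coe).Connected) :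
    ∀ (n : ℕ) (A : {F : Set (Sym2 V) // IsAlmostTree G F}) (a o : V), a ≠ o →
    (Bset A.1 a o).ncard ≤ n →
    ∃ B, Rch G A B ∧ Moved (Bset A.1 a o) A.1 B.1 ∧ Bset B.1 a o = ∅ := by
  intro n
  induction n with
  | zero =>
    intro A a o hao hcard
    rcases Set.eq_empty_or_nonempty (Bset A.1 a o) with hE | hNE
    · exact ⟨A, Relation.ReflTransGen.refl, Moved.rfl, hE⟩
    · exfalso
      have := Set.ncard_pos (Set.toFinite _) |>.2 hNE
      omega
  | succ n ih =>
    intro A a o hao hcard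
    rcases Set.eq_empty_or_nonempty (Bset A.1 a o) with hE | hNE
    · exact ⟨A, Relation.ReflTransGen.refl, Moved.rfl, hE⟩
    set B₀ := Bset A.1 a o with hB₀
    obtain ⟨z₀, hz₀⟩ := hNE
    have hz₀a : z₀ ≠ a := hz₀.1
    have hoa : o ≠ a := Ne.symm hao
    obtain ⟨w, hwa⟩ := h2_usable h2conn a hz₀a hoa
    have hoB₀ : o ∉ B₀ := o_not_mem_Bset
    obtain ⟨p, q, hpB, hqB, hadjpq, hpsup, hqsup⟩ := exit_lemma w hz₀ hoB₀
    have hqa : q ≠ a := by rintro rfl; exact hwa hqsup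
    have hpa : p ≠ a := hpB.1
    have hap : a ≠ p := Ne.symm hpa
    have haB₀ : a ∉ B₀ := a_not_mem_Bset
    -- inner zone
    have hZsub : Bset A.1 p a ⊆ B₀ \ {p} := bset_nested hao hpB
    have hcard' : (Bset A.1 p a).ncard ≤ n := by
      have h1 : (Bset A.1 p a).ncard ≤ (B₀ \ {p}).ncard :=
        Set.ncard_le_ncard hZsub (Set.toFinite _)
      have h2 : (B₀ \ {p}).ncard = B₀.ncard - 1 :=
        Set.ncard_diff_singleton_of_mem hpB
      have h3 : 1 ≤ B₀.ncard := Set.ncard_pos (Set.toFinite _) |>.2 ⟨p, hpB⟩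
      omega
    obtain ⟨B₁, hR1, Mv₁, hEmpty₁⟩ := ih A p a hpa hcard'
    have hpZ' : p ∉ Bset A.1 p a := a_not_mem_Bset
    have haZ' : a ∉ Bset A.1 p a := o_not_mem_Bset
    have hZ'B₀ : Bset A.1 p a ⊆ B₀ := fun z hz => (hZsub hz).1
    -- p is connected to a in B₁
    have hCnpa : Cn B₁.1 p a :=
      (Mv₁.cn p a hpZ' haZ').2 (cn_mono (Fm_subset _ _) hpB.2.1)
    -- every neighbour of p in B₁ reaches a avoiding p
    have hnd₁ : ∀ e ∈ B₁.1, ¬ e.IsDiag :=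
      fun e he => G.not_isDiag_of_mem_edgeSet (B₁.2.1 he)
    have hnbrs : ∀ z, s(p,z) ∈ B₁.1 → z ≠ a → Cn (Fm B₁.1 p) z a := by
      intro z hz hza
      by_contra hno
      have hzp : z ≠ p := by
        intro h; exact hnd₁ _ hz (by rw [h]; rfl)
      have : z ∈ Bset B₁.1 p a := by
        refine ⟨hzp, ?_, hno⟩
        exact (cn_of_mem (show s(p,z) ∈ Fm B₁.1 a from ⟨hz, not_mem_edge hap (Ne.symm hza)⟩)
          (Ne.symm hzp)).symm
      rw [hEmpty₁] at this
      exact this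
    obtain ⟨pp, hppleaf⟩ := exists_leaf B₁.2 hpa hCnpa hnbrs
    -- attach p to q (or it already is)
    have hstep : ∃ B₂, Rch G B₁ B₂ ∧ Moved ({p} : Set V) B₁.1 B₂.1 ∧
        IsLeafAt B₂.1 p q := by
      by_cases hppq : pp = q
      · exact ⟨B₁, Relation.ReflTransGen.refl, Moved.rfl, hppq ▸ hppleaf⟩
      · have hsp := spin_good B₁.2 hppleaf hadjpq (fun h => hppq h.symm)
        exact ⟨⟨_, hsp.1⟩, Relation.ReflTransGen.single hsp.2.1,
          moved_spin hppleaf (G.ne_of_adj hadjpq) (fun h => hppq h.symm), hsp.2.2⟩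
    obtain ⟨B₂, hR2, Mv₂, hleaf₂⟩ := hstep
    have MvA2 : Moved B₀ A.1 B₂.1 :=
      (Mv₁.mono hZ'B₀).comp (Mv₂.mono (by simpa using hpB))
    -- q's status in A
    have hq_status : Cn (Fm A.1 a) q o ∨ ¬ Cn (Fm A.1 o) q a := by
      by_cases h : Cn (Fm A.1 a) q o
      · exact Or.inl h
      · refine Or.inr ?_
        intro hqa'
        exact hqB ⟨hqa, hqa', h⟩
    -- p is not in the new zone
    have hpq : p ≠ q := G.ne_of_adj hadjpq
    have hpnotB₂ : p ∉ Bset B₂.1 a o := by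
      rcases hq_status with hα | hβ
      · intro hmem
        have hqoB₂ : Cn (Fm B₂.1 a) q o := (MvA2.fm a q o hqB hoB₀).2 hα
        have hedge : s(p,q) ∈ Fm B₂.1 a := ⟨hleaf₂.1, not_mem_edge hap (Ne.symm hqa)⟩
        exact hmem.2.2 ((cn_of_mem hedge hpq).trans hqoB₂)
      · rintro ⟨hpa', h21, h22⟩
        by_cases hqo : q = o
        · -- p isolated in Fm B₂ o
          have hiso : ∀ g ∈ Fm B₂.1 o, p ∉ g := by
            rintro g ⟨hg, hgo⟩ hpg
            have := hppleaf -- not needed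
            have hg' := hleaf₂.2.2 g hg hpg
            rw [hg'] at hgo
            exact hgo (hqo ▸ Sym2.mem_mk_right _ _)
          exact hpa (cn_isolated hiso h21).symm
        · have huniq' : ∀ g ∈ Fm B₂.1 o, p ∈ g → g = s(p,q) :=
            fun g hg hpg => hleaf₂.2.2 g (Fm_subset _ _ hg) hpg
          have := cn_leaf_step huniq' h21 hpa
          exact hβ ((MvA2.fm o q a hqB haB₀).1 this)
    -- new zone is contained in B₀ \ {p}
    have hsub₂ : Bset B₂.1 a o ⊆ B₀ \ {p} := by
      intro z hz
      have hzp : z ≠ p := by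
        rintro rfl; exact hpnotB₂ hz
      refine ⟨?_, hzp⟩
      by_contra hzB₀
      obtain ⟨hza, h2, h3⟩ := hz
      refine hzB₀ ⟨hza, (MvA2.fm o z a hzB₀ haB₀).1 h2, fun hh => h3 ?_⟩
      exact (MvA2.fm a z o hzB₀ hoB₀).2 hh
    have hcard₂ : (Bset B₂.1 a o).ncard ≤ n := by
      have h1 : (Bset B₂.1 a o).ncard ≤ (B₀ \ {p}).ncard :=
        Set.ncard_le_ncard hsub₂ (Set.toFinite _)
      have h2 : (B₀ \ {p}).ncard = B₀.ncard - 1 :=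
        Set.ncard_diff_singleton_of_mem hpB
      have h3 : 1 ≤ B₀.ncard := Set.ncard_pos (Set.toFinite _) |>.2 ⟨p, hpB⟩
      omega
    obtain ⟨B₃, hR3, Mv₃, hEmpty₃⟩ := ih B₂ a o hao hcard₂
    refine ⟨B₃, Relation.ReflTransGen.trans hR1 (Relation.ReflTransGen.trans hR2 hR3), ?_,
      hEmpty₃⟩
    exact MvA2.comp (Mv₃.mono (fun z hz => (hsub₂ hz).1))


/-- boilerplate: if `Bset F a o = ∅` then every neighbour of `a` other than `o`
reaches `o` avoiding `a`. -/
lemma nbrs_of_empty {F : Set (Sym2 V)} (hnd : ∀ e ∈ F, ¬ e.IsDiag) {a o : V}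
    (hao : a ≠ o) (hE : Bset F a o = ∅) :
    ∀ z, s(a,z) ∈ F → z ≠ o → Cn (Fm F a) z o := by
  intro z hz hzo
  by_contra hno
  have hza : z ≠ a := by
    intro h; exact hnd _ hz (by rw [h]; rfl)
  have : z ∈ Bset F a o := by
    refine ⟨hza, ?_, hno⟩
    exact (cn_of_mem (show s(a,z) ∈ Fm F o from
      ⟨hz, not_mem_edge (Ne.symm hao) (Ne.symm hzo)⟩) (Ne.symm hza)).symm
  rw [hE] at this
  exact this

lemma ncard_le_cardV (S : Set V) : S.ncard ≤ Fintype.card V := by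
  have := Set.ncard_le_ncard (Set.subset_univ S) (Set.toFinite _)
  rwa [Set.ncard_univ, Nat.card_eq_fintype_card] at this

lemma install
    (h2conn : ∀ v : V, (((⊤ : G.Subgraph).deleteVerts {v}).coe).Connected)
    (A : {F : Set (Sym2 V) // IsAlmostTree G F}) (T' : Set (Sym2 V)) (H' : Set V)
    (hT'A : T' ⊆ A.1)
    (hT'H : ∀ e ∈ T', ∀ x ∈ e, x ∈ H')
    (hT'conn : ∀ x ∈ H', ∀ y ∈ H', Cn T' x y)
    {u v q : V} (huH : u ∉ H') (hvH : v ∈ H') (hadj_uv : G.Adj u v)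
    (hqH : q ∉ H') (hqu : q ≠ u) (hadj_uq : G.Adj u q) :
    ∃ B, Rch G A B ∧ insert s(u,v) T' ⊆ B.1 := by
  have huv : u ≠ v := G.ne_of_adj hadj_uv
  -- T' avoids any x ∉ H'
  have hT'avoid : ∀ (x : V), x ∉ H' → ∀ e ∈ T', x ∉ e :=
    fun x hx e he hxe => hx (hT'H e he x hxe)
  have hzoneH : ∀ (F : Set (Sym2 V)), T' ⊆ F → ∀ x, x ∉ H' → ∀ h ∈ H', h ∉ Bset F x v := by
    intro F hTF x hx h hh hmem
    have hsub : T' ⊆ Fm F x := fun e he => ⟨hTF he, hT'avoid x hx e he⟩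
    exact hmem.2.2 (cn_mono hsub (hT'conn h hh v hvH))
  -- step 1 : clear below u towards v
  obtain ⟨B₁, hR1, Mv₁, hE₁⟩ :=
    clear h2conn (Fintype.card V) A u v huv (ncard_le_cardV _)
  have hT'B₁ : T' ⊆ B₁.1 := by
    intro e he
    refine (Mv₁.edge e ?_).2 (hT'A he)
    intro z hz
    exact hzoneH A.1 hT'A u huH z (hT'H e he z hz)
  have hnd₁ : ∀ e ∈ B₁.1, ¬ e.IsDiag := fun e he => G.not_isDiag_of_mem_edgeSet (B₁.2.1 he)
  have hnbrs₁ := nbrs_of_empty hnd₁ huv hE₁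
  by_cases hCnuv₁ : Cn B₁.1 u v
  · -- u's component contains v : u is a leaf, one spin (or zero) finishes
    obtain ⟨z₀, hleaf⟩ := exists_leaf B₁.2 huv hCnuv₁ hnbrs₁
    by_cases hz₀v : z₀ = v
    · refine ⟨B₁, hR1, ?_⟩
      intro e he
      rcases Set.mem_insert_iff.1 he with rfl | he
      · exact hz₀v ▸ hleaf.1
      · exact hT'B₁ he
    · have hsp := spin_good B₁.2 hleaf hadj_uv (fun h => hz₀v h.symm)
      refine ⟨⟨_, hsp.1⟩, Rch.trans hR1 (Relation.ReflTransGen.single hsp.2.1), ?_⟩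
      intro e he
      rcases Set.mem_insert_iff.1 he with rfl | he
      · exact Set.mem_insert _ _
      · refine Set.mem_insert_of_mem _ ⟨hT'B₁ he, ?_⟩
        simp only [Set.mem_singleton_iff]
        intro hh
        exact hT'avoid u huH e he (hh ▸ Sym2.mem_mk_left _ _)
  · -- u's component does not contain v : u is isolated in B₁
    have hisoU : ∀ g ∈ B₁.1, u ∉ g := by
      intro g hg hug
      obtain ⟨z, rfl⟩ := Sym2.mem_iff_exists.1 hug
      have hzu : u ≠ z := fun h => hnd₁ _ hg (by rw [← h]; rfl)
      by_cases hzv : z = v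
      · exact hCnuv₁ (hzv ▸ cn_of_mem hg hzu)
      · exact hCnuv₁ ((cn_of_mem hg hzu).trans (cn_mono (Fm_subset _ _) (hnbrs₁ z hg hzv)))
    have hvu : v ≠ u := Ne.symm huv
    have hCnqv₁ : Cn B₁.1 q v := by
      obtain ⟨a₀, b₀, hab, hall⟩ := (twocomps_iff B₁.1).1 B₁.2.2.2
      have key : ∀ x, x ≠ u → ∀ y, y ≠ u → Cn B₁.1 x y := by
        rcases hall u with h | h
        · have ha₀ : a₀ = u := cn_isolated hisoU h
          intro x hx y hy
          have hx' : Cn B₁.1 x b₀ := by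
            rcases hall x with hh | hh
            · exact absurd (cn_isolated hisoU (ha₀ ▸ hh).symm) hx
            · exact hh
          have hy' : Cn B₁.1 y b₀ := by
            rcases hall y with hh | hh
            · exact absurd (cn_isolated hisoU (ha₀ ▸ hh).symm) hy
            · exact hh
          exact hx'.trans hy'.symm
        · have hb₀ : b₀ = u := cn_isolated hisoU h
          intro x hx y hy
          have hx' : Cn B₁.1 x a₀ := by
            rcases hall x with hh | hh
            · exact hh
            · exact absurd (cn_isolated hisoU (hb₀ ▸ hh).symm) hx
          have hy' : Cn B₁.1 y a₀ := by
            rcases hall y with hh | hh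
            · exact hh
            · exact absurd (cn_isolated hisoU (hb₀ ▸ hh).symm) hy
          exact hx'.trans hy'.symm
      exact key q hqu v hvu
    have hqv : q ≠ v := fun h => hqH (h ▸ hvH)
    -- step 2 : clear below q towards v
    obtain ⟨B₂, hR2, Mv₂, hE₂⟩ :=
      clear h2conn (Fintype.card V) B₁ q v hqv (ncard_le_cardV _)
    have huZ₂ : u ∉ Bset B₁.1 q v := by
      rintro ⟨h1, h2, h3⟩
      have hiso' : ∀ e ∈ Fm B₁.1 v, u ∉ e := fun e he => hisoU e (Fm_subset _ _ he)
      exact h1 (cn_isolated hiso' h2).symm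
    have hvZ₂ : v ∉ Bset B₁.1 q v := o_not_mem_Bset
    have hT'B₂ : T' ⊆ B₂.1 := by
      intro e he
      refine (Mv₂.edge e ?_).2 (hT'B₁ he)
      intro z hz
      exact hzoneH B₁.1 hT'B₁ q hqH z (hT'H e he z hz)
    have hnd₂ : ∀ e ∈ B₂.1, ¬ e.IsDiag := fun e he => G.not_isDiag_of_mem_edgeSet (B₂.2.1 he)
    have hCnuv₂ : ¬ Cn B₂.1 u v := fun h => hCnuv₁ ((Mv₂.cn u v huZ₂ hvZ₂).1 h)
    have hqZ₂ : q ∉ Bset B₁.1 q v := a_not_mem_Bset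
    have hCnqv₂ : Cn B₂.1 q v := (Mv₂.cn q v hqZ₂ hvZ₂).2 hCnqv₁
    have hnbrsQ := nbrs_of_empty hnd₂ hqv hE₂
    obtain ⟨qq, hleafQ⟩ := exists_leaf B₂.2 hqv hCnqv₂ hnbrsQ
    have hqqu : u ≠ qq := by
      rintro rfl
      exact hCnuv₂ ((cn_of_mem hleafQ.1 hleafQ.2.1).symm.trans hCnqv₂)
    have hspQ := spin_good B₂.2 hleafQ hadj_uq.symm hqqu
    set B₃ : {F : Set (Sym2 V) // IsAlmostTree G F} := ⟨_, hspQ.1⟩ with hB₃def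
    have MvQ : Moved ({q} : Set V) B₂.1 B₃.1 := moved_spin hleafQ hqu hqqu
    have hT'B₃ : T' ⊆ B₃.1 := by
      intro e he
      refine Set.mem_insert_of_mem _ ⟨hT'B₂ he, ?_⟩
      simp only [Set.mem_singleton_iff]
      intro hh
      exact hT'avoid q hqH e he (hh ▸ Sym2.mem_mk_left _ _)
    have hequ₃ : s(q,u) ∈ B₃.1 := Set.mem_insert _ _
    have huq₃ : u ∉ ({q} : Set V) := by
      simp only [Set.mem_singleton_iff]
      exact Ne.symm hqu
    have hvq₃ : v ∉ ({q} : Set V) := by simpa using fun h => hqv h.symm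
    have hCnuv₃ : ¬ Cn B₃.1 u v := fun h => hCnuv₂ ((MvQ.cn u v huq₃ hvq₃).1 h)
    have huq : u ≠ q := Ne.symm hqu
    -- step 3 : clear below u towards q
    obtain ⟨B₄, hR4, Mv₄, hE₄⟩ :=
      clear h2conn (Fintype.card V) B₃ u q huq (ncard_le_cardV _)
    have hCnB₃hv : ∀ h ∈ H', Cn B₃.1 h v := fun h hh =>
      cn_mono hT'B₃ (hT'conn h hh v hvH)
    have hZ₄H : ∀ h ∈ H', h ∉ Bset B₃.1 u q := by
      intro h hh hmem
      exact hCnuv₃ ((cn_mono (Fm_subset _ _) hmem.2.1).symm.trans (hCnB₃hv h hh))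
    have hvZ₄ : v ∉ Bset B₃.1 u q := by
      rintro ⟨h1, h2, h3⟩
      exact hCnuv₃ (cn_mono (Fm_subset _ _) h2).symm
    have huZ₄ : u ∉ Bset B₃.1 u q := a_not_mem_Bset
    have hqZ₄ : q ∉ Bset B₃.1 u q := o_not_mem_Bset
    have hT'B₄ : T' ⊆ B₄.1 := by
      intro e he
      refine (Mv₄.edge e ?_).2 (hT'B₃ he)
      intro z hz
      exact hZ₄H z (hT'H e he z hz)
    have hnd₄ : ∀ e ∈ B₄.1, ¬ e.IsDiag := fun e he => G.not_isDiag_of_mem_edgeSet (B₄.2.1 he)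
    have hequ₄ : s(q,u) ∈ B₄.1 := by
      refine (Mv₄.edge s(q,u) ?_).2 hequ₃
      intro z hz
      rw [Sym2.mem_iff] at hz
      rcases hz with rfl | rfl
      · exact hqZ₄
      · exact huZ₄
    have hCnuv₄ : ¬ Cn B₄.1 u v := fun h => hCnuv₃ ((Mv₄.cn u v huZ₄ hvZ₄).1 h)
    have hCnuq₄ : Cn B₄.1 u q := (cn_of_mem hequ₄ (Ne.symm huq)).symm
    have hnbrsU := nbrs_of_empty hnd₄ huq hE₄
    obtain ⟨uu, hleafU⟩ := exists_leaf B₄.2 huq hCnuq₄ hnbrsU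
    have huuv : v ≠ uu := by
      rintro rfl
      exact hCnuv₄ (cn_of_mem hleafU.1 hleafU.2.1)
    have hspF := spin_good B₄.2 hleafU hadj_uv huuv
    have hR3 : Rch G B₂ B₃ := Relation.ReflTransGen.single hspQ.2.1
    set B₅ : {F : Set (Sym2 V) // IsAlmostTree G F} := ⟨_, hspF.1⟩ with hB₅def
    have hR5 : Rch G B₄ B₅ := Relation.ReflTransGen.single hspF.2.1
    refine ⟨B₅, ?_, ?_⟩
    · exact Rch.trans hR1 (Rch.trans hR2 (Rch.trans hR3 (Rch.trans hR4 hR5)))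
    · intro e he
      rcases Set.mem_insert_iff.1 he with rfl | he
      · exact Set.mem_insert _ _
      · refine Set.mem_insert_of_mem _ ⟨hT'B₄ he, ?_⟩
        simp only [Set.mem_singleton_iff]
        intro hh
        exact hT'avoid u huH e he (hh ▸ Sym2.mem_mk_left _ _)


lemma Rch.trans' {A B C : {F : Set (Sym2 V) // IsAlmostTree G F}}
    (h : Rch G A B) (h' : Rch G B C) : Rch G A C :=
  Relation.ReflTransGen.trans h h'

/-- Leaf spins between almost-trees are symmetric. -/
lemma leafspin_symm {A B : {F : Set (Sym2 V) // IsAlmostTree G F}}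
    (h : LeafSpin G A.1 B.1) : LeafSpin G B.1 A.1 := by
  obtain ⟨e, e', v, heF, hve, hcard, hve', he'G, he'F, hB⟩ := h
  have hnd : ∀ g ∈ A.1, ¬ g.IsDiag := fun g hg => G.not_isDiag_of_mem_edgeSet (A.2.1 hg)
  obtain ⟨u, hleaf⟩ := (natcard_neighborSet_eq_one_iff hnd).1 hcard
  have he : e = s(v,u) := hleaf.2.2 e heF hve
  obtain ⟨w, rfl⟩ := Sym2.mem_iff_exists.1 hve'
  have hvw : v ≠ w := fun hh => (G.not_isDiag_of_mem_edgeSet he'G) (by rw [← hh]; rfl)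
  have hadj : G.Adj v w := (SimpleGraph.mem_edgeSet G).1 he'G
  have hwu : w ≠ u := by
    rintro rfl
    rw [← he] at he'F
    exact he'F heF
  have hB' : B.1 = insert s(v,w) (A.1 \ {s(v,u)}) := by rw [hB, he]
  have hsp := spin_good A.2 hleaf hadj hwu
  have := spin_rev A.2 hleaf hadj hwu hsp.1 hsp.2.2
  rw [← hB'] at this
  exact this

lemma rch_symm {A B : {F : Set (Sym2 V) // IsAlmostTree G F}} (h : Rch G A B) :
    Rch G B A := by
  induction h with
  | refl => exact Relation.ReflTransGen.refl
  | tail hstep hlast ih =>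
    exact Relation.ReflTransGen.trans (Relation.ReflTransGen.single (leafspin_symm hlast)) ih

/-- Build a spanning tree of `G[H]` that every almost-tree can be made to contain. -/
lemma buildT (hcon : G.Connected)
    (h2conn : ∀ v : V, (((⊤ : G.Subgraph).deleteVerts {v}).coe).Connected) :
    ∀ (n : ℕ) (H : Set V), H.ncard ≤ n → H.Nonempty → Hᶜ.Nonempty → SConn G H →
    ∃ T : Set (Sym2 V), (∀ e ∈ T, ∀ x ∈ e, x ∈ H) ∧ (∀ x ∈ H, ∀ y ∈ H, Cn T x y) ∧
      ∀ A, ∃ B, Rch G A B ∧ T ⊆ B.1 := by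
  intro n
  induction n with
  | zero =>
    intro H hcard hne _ _
    exfalso
    have := Set.ncard_pos (Set.toFinite _) |>.2 hne
    omega
  | succ n ih =>
    intro H hcard hne hco hS
    by_cases h1 : H.ncard = 1
    · obtain ⟨ρ, hρ⟩ := Set.ncard_eq_one.1 h1
      refine ⟨∅, by simp, ?_, ?_⟩
      · intro x hx y hy
        rw [hρ, Set.mem_singleton_iff] at hx hy
        exact cn_of_eq (hx.trans hy.symm)
      · intro A
        exact ⟨A, Relation.ReflTransGen.refl, by simp⟩
    -- peel a vertex
    obtain ⟨u, huH, ⟨q, hqH, hadjuq⟩, hS'⟩ := peel hcon h2conn H hS hne hco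
    have hcard1 : 1 ≤ H.ncard := Set.ncard_pos (Set.toFinite _) |>.2 hne
    have hcard2 : 2 ≤ H.ncard := by omega
    -- H' = H \ {u} is nonempty
    have hH'ne : (H \ {u}).Nonempty := by
      have h2lt : 1 < H.ncard := by omega
      rcases Set.exists_ne_of_one_lt_ncard h2lt u with ⟨y, hyH, hyu⟩
      exact ⟨y, hyH, by simpa using hyu⟩
    have hH'co : (H \ {u})ᶜ.Nonempty := by
      obtain ⟨z, hz⟩ := hco
      exact ⟨z, fun hh => hz hh.1⟩
    have hH'card : (H \ {u}).ncard ≤ n := by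
      have := Set.ncard_diff_singleton_of_mem huH
      omega
    obtain ⟨T', hT'H, hT'conn, hinstall'⟩ := ih (H \ {u}) hH'card hH'ne hH'co hS'
    -- parent of u inside H'
    obtain ⟨y₀, hy₀⟩ := hH'ne
    obtain ⟨w, hw⟩ := hS u huH y₀ hy₀.1
    have hv : ∃ v, v ∈ H \ {u} ∧ G.Adj u v := by
      cases w with
      | nil => exact (hy₀.2 rfl).elim
      | @cons _ z _ h w' =>
        refine ⟨z, ⟨hw z (by simp [Walk.support_cons]), ?_⟩, h⟩
        simp only [Set.mem_singleton_iff]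
        exact fun hh => G.irrefl (hh ▸ h)
    obtain ⟨v, hvH', hadjuv⟩ := hv
    refine ⟨insert s(u,v) T', ?_, ?_, ?_⟩
    · rintro e (rfl | he)
      · intro x hx
        rw [Sym2.mem_iff] at hx
        rcases hx with rfl | rfl
        · exact huH
        · exact hvH'.1
      · exact fun x hx => (hT'H e he x hx).1
    · -- connectivity of H through the new tree
      have hxu : ∀ x ∈ H, Cn (insert s(u,v) T') x u := by
        intro x hx
        by_cases hxu : x = u
        · exact cn_of_eq hxu
        · have hx' : x ∈ H \ {u} := ⟨hx, by simpa using hxu⟩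
          have h1 : Cn T' x v := hT'conn x hx' v hvH'
          have h2 : Cn (insert s(u,v) T') v u :=
            (cn_of_mem (Set.mem_insert _ _) (G.ne_of_adj hadjuv)).symm
          exact (cn_mono (Set.subset_insert _ _) h1).trans h2
      intro x hx y hy
      exact (hxu x hx).trans (hxu y hy).symm
    · intro A
      obtain ⟨B₁, hR1, hsub1⟩ := hinstall' A
      have hqu : q ≠ u := fun hh => G.irrefl (hh ▸ hadjuq)
      obtain ⟨B₂, hR2, hsub2⟩ := install h2conn B₁ T' (H \ {u}) hsub1 hT'H hT'conn
        (by simp) hvH' hadjuv (fun hh => hqH hh.1) hqu hadjuq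
      exact ⟨B₂, Rch.trans' hR1 hR2, hsub2⟩



lemma unique_of_supset {r : V} (T : Set (Sym2 V))
    (hTW : ∀ e ∈ T, ∀ x ∈ e, x ∈ ({r}ᶜ : Set V))
    (hTconn : ∀ x ∈ ({r}ᶜ : Set V), ∀ y ∈ ({r}ᶜ : Set V), Cn T x y)
    (B : {F : Set (Sym2 V) // IsAlmostTree G F}) (hsub : T ⊆ B.1) : B.1 = T := by
  refine Set.Subset.antisymm ?_ hsub
  intro g hg
  by_contra hgT
  have hnd : ¬ g.IsDiag := G.not_isDiag_of_mem_edgeSet (B.2.1 hg)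
  have hredge : ∀ z, z ≠ r → s(r,z) ∈ B.1 → False := by
    intro z hzr hmem
    have hall : ∀ p, Cn B.1 p r := by
      intro p
      by_cases hp : p = r
      · exact cn_of_eq hp
      · have h1 : Cn T p z := hTconn p (by simpa using hp) z (by simpa using hzr)
        have h2 : Cn B.1 z r := (cn_of_mem hmem (Ne.symm hzr)).symm
        exact (cn_mono hsub h1).trans h2
    obtain ⟨a, b, hab, _⟩ := (twocomps_iff B.1).1 B.2.2.2
    exact hab ((hall a).trans (hall b).symm)
  induction g with
  | _ x y =>
    have hxy : x ≠ y := by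
      intro h
      exact hnd (by rw [h]; rfl)
    by_cases hx : x = r
    · exact hredge y (fun h => hxy (hx.trans h.symm)) (hx ▸ hg)
    · by_cases hy : y = r
      · refine hredge x hx ?_
        have : s(x,y) = s(r,x) := by rw [Sym2.eq_swap, hy]
        exact this ▸ hg
      · have hbr := (SimpleGraph.isAcyclic_iff_forall_edge_isBridge).1 B.2.2.1
          (e := s(x,y)) (by
            rw [edgeSet_eq (fun e he => G.not_isDiag_of_mem_edgeSet (B.2.1 he))]
            exact hg)
        have hbridge : ¬ Cn (B.1 \ {s(x,y)}) x y := (bridge_iff_cn hg hxy).1 hbr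
        have hTsub : T ⊆ B.1 \ {s(x,y)} := by
          intro e he
          refine ⟨hsub he, ?_⟩
          simp only [Set.mem_singleton_iff]
          rintro rfl
          exact hgT he
        exact hbridge (cn_mono hTsub
          (hTconn x (by simpa using hx) y (by simpa using hy)))

theorem stmt12' (hconn : G.Connected)
    (h2conn : ∀ v : V, (((⊤ : G.Subgraph).deleteVerts {v}).coe).Connected)
    (F₁ F₂ : {F : Set (Sym2 V) // IsAlmostTree G F}) :
    Relation.ReflTransGen
      (fun A B : {F : Set (Sym2 V) // IsAlmostTree G F} => LeafSpin G A.1 B.1)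
      F₁ F₂ := by
  obtain ⟨a, b, hab, hall⟩ := (twocomps_iff F₁.1).1 F₁.2.2.2
  have hba : b ≠ a := by
    rintro rfl
    exact hab (Cn.refl _ _)
  have hSW : SConn G ({a}ᶜ : Set V) := by
    intro x hx y hy
    obtain ⟨w, hw⟩ := h2_usable h2conn a (by simpa using hx) (by simpa using hy)
    exact ⟨w, fun z hz => by
      simp only [Set.mem_compl_iff, Set.mem_singleton_iff]
      rintro rfl
      exact hw hz⟩
  have hWne : ({a}ᶜ : Set V).Nonempty := ⟨b, by simpa using hba⟩
  have hWco : (({a}ᶜ : Set V))ᶜ.Nonempty := ⟨a, by simp⟩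
  obtain ⟨T, hTH, hTconn, hinst⟩ := buildT hconn h2conn (({a}ᶜ : Set V)).ncard
    ({a}ᶜ : Set V) le_rfl hWne hWco hSW
  obtain ⟨B₁, hR1, hsub1⟩ := hinst F₁
  obtain ⟨B₂, hR2, hsub2⟩ := hinst F₂
  have hB1 : B₁.1 = T := unique_of_supset T hTH hTconn B₁ hsub1
  have hB2 : B₂.1 = T := unique_of_supset T hTH hTconn B₂ hsub2
  have hBB : B₁ = B₂ := Subtype.ext (hB1.trans hB2.symm)
  have : Rch G F₁ F₂ := Rch.trans' hR1 (hBB ▸ rch_symm hR2)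
  exact this


end
end StmtTwelve

/-- For a finite `2`-connected plane graph `G`, the graph whose
vertices are the spanning almost-trees of `G` and whose edges are leaf spins is
connected. -/
theorem stmt12 {V : Type*} [Fintype V] (G : SimpleGraph V) (hconn : G.Connected)
    (h2conn : ∀ v : V, (((⊤ : G.Subgraph).deleteVerts {v}).coe).Connected)
    (F₁ F₂ : {F : Set (Sym2 V) // IsAlmostTree G F}) :
    Relation.ReflTransGen
      (fun A B : {F : Set (Sym2 V) // IsAlmostTree G F} => LeafSpin G A.1 B.1)
      F₁ F₂ := by
  exact StmtTwelve.stmt12' hconn h2conn F₁ F₂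
end

section
/- Let $x$ be a perfect matching on the overlaid Tait graph $\Gamma(D)$ of a knot projection $D$ that is admissible (leaves exactly one black and one white region unmatched; all crossings matched). Let $H_x^b \subseteq G_b$ and $H_x^w \subseteq G_w$ be the induced black and white subgraphs (an edge of $G_b$ is included iff its crossing is matched with one of its black endpoints, similarly for $G_w$). Then every connected component of $H_x^b$ and of $H_x^w$ is either a tree or has first Betti number exactly $1$ (homotopy type of a circle), and there is exactly one tree component of each colour. -/
section Tait

variable {B W C : Type*}

/-- Connectivity in the black graph through the edges (crossings) in `S`. -/
def reachB (bE : C → Sym2 B) (S : Set C) : B → B → Prop :=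
  Relation.ReflTransGen (fun u v => ∃ c ∈ S, bE c = s(u, v))

/-- Connectivity in the white graph through the edges (crossings) in `S`. -/
def reachW (wE : C → Sym2 W) (S : Set C) : W → W → Prop :=
  Relation.ReflTransGen (fun u v => ∃ c ∈ S, wE c = s(u, v))

/-- Black edges induced by a perfect matching: crossings matched with a black region. -/
def blackSetT (x : C → B ⊕ W) : Set C := {c | ∃ b, x c = Sum.inl b}

/-- White edges induced by a perfect matching. -/
def whiteSetT (x : C → B ⊕ W) : Set C := {c | ∃ w, x c = Sum.inr w}

/-- Vertex set of the connected component of `b` in the induced black subgraph. -/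
def compVB (bE : C → Sym2 B) (x : C → B ⊕ W) (b : B) : Set B :=
  {b' | reachB bE (blackSetT x) b b'}

/-- Edge set of the connected component of `b` in the induced black subgraph. -/
def compEB (bE : C → Sym2 B) (x : C → B ⊕ W) (b : B) : Set C :=
  {c | c ∈ blackSetT x ∧ ∃ b1, b1 ∈ bE c ∧ reachB bE (blackSetT x) b b1}

/-- Vertex set of the connected component of `w` in the induced white subgraph. -/
def compVW (wE : C → Sym2 W) (x : C → B ⊕ W) (w : W) : Set W :=
  {w' | reachW wE (whiteSetT x) w w'}

/-- Edge set of the connected component of `w` in the induced white subgraph. -/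
def compEW (wE : C → Sym2 W) (x : C → B ⊕ W) (w : W) : Set C :=
  {c | c ∈ whiteSetT x ∧ ∃ w1, w1 ∈ wE c ∧ reachW wE (whiteSetT x) w w1}

/-- The component of `b` is a tree: one more vertex than edges. -/
def IsTreeCompB (bE : C → Sym2 B) (x : C → B ⊕ W) (b : B) : Prop :=
  Nat.card (compEB bE x b) + 1 = Nat.card (compVB bE x b)

/-- The component of `w` is a tree. -/
def IsTreeCompW (wE : C → Sym2 W) (x : C → B ⊕ W) (w : W) : Prop :=
  Nat.card (compEW wE x w) + 1 = Nat.card (compVW wE x w)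

end Tait
theorem color_main {B C : Type*} [Fintype B] [Fintype C]
    (E : C → Sym2 B) (S : Set C) (m : C → B)
    (hmInj : Set.InjOn m S)
    (hmE : ∀ c ∈ S, m c ∈ E c)
    (b₀ : B) (hb₀ : ∀ c ∈ S, m c ≠ b₀)
    (hsur : ∀ v, v ≠ b₀ → ∃ c ∈ S, m c = v) (b : B) :
    (Nat.card {c | c ∈ S ∧ ∃ b1, b1 ∈ E c ∧
        Relation.ReflTransGen (fun u v => ∃ c ∈ S, E c = s(u, v)) b b1} + 1
      = Nat.card {v | Relation.ReflTransGen (fun u v => ∃ c ∈ S, E c = s(u, v)) b v}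
      ∨ Nat.card {c | c ∈ S ∧ ∃ b1, b1 ∈ E c ∧
        Relation.ReflTransGen (fun u v => ∃ c ∈ S, E c = s(u, v)) b b1}
      = Nat.card {v | Relation.ReflTransGen (fun u v => ∃ c ∈ S, E c = s(u, v)) b v}) ∧
    ((Nat.card {c | c ∈ S ∧ ∃ b1, b1 ∈ E c ∧
        Relation.ReflTransGen (fun u v => ∃ c ∈ S, E c = s(u, v)) b b1} + 1
      = Nat.card {v | Relation.ReflTransGen (fun u v => ∃ c ∈ S, E c = s(u, v)) b v})
      ↔ Relation.ReflTransGen (fun u v => ∃ c ∈ S, E c = s(u, v)) b b₀) := by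
  set r : B → B → Prop := fun u v => ∃ c ∈ S, E c = s(u, v) with hr
  set Vb : Set B := {v | Relation.ReflTransGen r b v} with hV
  set Eb : Set C := {c | c ∈ S ∧ ∃ b1, b1 ∈ E c ∧ Relation.ReflTransGen r b b1} with hE
  have himg : m '' Eb = Vb \ {b₀} := by
    ext v
    constructor
    · rintro ⟨c, ⟨hcS, b1, hb1, hreach⟩, rfl⟩
      have hmc : m c ∈ E c := hmE c hcS
      have hother : s(b1, Sym2.Mem.other hb1) = E c := Sym2.other_spec hb1
      have hstep : r b1 (Sym2.Mem.other hb1) := ⟨c, hcS, hother.symm⟩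
      have hreach2 : Relation.ReflTransGen r b (Sym2.Mem.other hb1) := hreach.tail hstep
      have : m c = b1 ∨ m c = Sym2.Mem.other hb1 := by
        rw [← hother] at hmc; exact Sym2.mem_iff.mp hmc
      refine ⟨?_, by simpa using hb₀ c hcS⟩
      rcases this with h | h <;> rw [h] <;> assumption
    · rintro ⟨hv, hne⟩
      obtain ⟨c, hcS, hmc⟩ := hsur v (by simpa using hne)
      exact ⟨c, ⟨hcS, v, by rw [← hmc]; exact hmE c hcS, hv⟩, hmc⟩
  have hcardE : Nat.card Eb = (Vb \ {b₀}).ncard := by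
    rw [Nat.card_coe_set_eq, ← himg,
      Set.ncard_image_of_injOn (hmInj.mono (fun c hc => hc.1))]
  have hcardV : Nat.card Vb = Vb.ncard := Nat.card_coe_set_eq _
  by_cases hmem : b₀ ∈ Vb
  · have htree : Nat.card Eb + 1 = Nat.card Vb := by
      rw [hcardE, hcardV]
      exact Set.ncard_diff_singleton_add_one hmem (Set.toFinite _)
    exact ⟨Or.inl htree, ⟨fun _ => hmem, fun _ => htree⟩⟩
  · have heq : Nat.card Eb = Nat.card Vb := by
      rw [hcardE, hcardV, Set.diff_singleton_eq_self hmem]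
    exact ⟨Or.inr heq, ⟨fun h => by omega, fun h => absurd h hmem⟩⟩

theorem reach_symm {B C : Type*} (E : C → Sym2 B) (S : Set C) :
    Symmetric (Relation.ReflTransGen (fun u v => ∃ c ∈ S, E c = s(u, v))) :=
  fun a b hab => (@Relation.ReflTransGen.symmetric _ _
    ⟨fun _ _ ⟨c, hc, h⟩ => ⟨c, hc, by rw [h, Sym2.eq_swap]⟩⟩).symm a b hab
/-- For a perfect admissible matching `x` on the overlaid Tait graph
(every crossing matched injectively to an incident region, exactly one unmatched region
of each colour), every connected component of the induced black and white subgraphs is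
either a tree (`#edges + 1 = #vertices`) or has first Betti number exactly one
(`#edges = #vertices`, the homotopy type of a circle), and there is exactly one tree
component of each colour. -/
theorem stmt15 {B W C : Type*} [Fintype B] [Fintype W] [Fintype C]
    (bE : C → Sym2 B) (wE : C → Sym2 W) (x : C → B ⊕ W)
    (hinj : Function.Injective x)
    (hincB : ∀ c b, x c = Sum.inl b → b ∈ bE c)
    (hincW : ∀ c w, x c = Sum.inr w → w ∈ wE c)
    (hadmB : ∃! b : B, ∀ c, x c ≠ Sum.inl b)
    (hadmW : ∃! w : W, ∀ c, x c ≠ Sum.inr w) :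
    (∀ b : B, IsTreeCompB bE x b ∨
        Nat.card (compEB bE x b) = Nat.card (compVB bE x b)) ∧
    (∀ w : W, IsTreeCompW wE x w ∨
        Nat.card (compEW wE x w) = Nat.card (compVW wE x w)) ∧
    (∃ b₀ : B, IsTreeCompB bE x b₀ ∧
        ∀ b : B, IsTreeCompB bE x b → reachB bE (blackSetT x) b₀ b) ∧
    (∃ w₀ : W, IsTreeCompW wE x w₀ ∧
        ∀ w : W, IsTreeCompW wE x w → reachW wE (whiteSetT x) w₀ w) := by

  obtain ⟨b₀, hb₀u, hb₀uniq⟩ := hadmB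
  obtain ⟨w₀, hw₀u, hw₀uniq⟩ := hadmW
  set mB : C → B := fun c => Sum.elim id (fun _ => b₀) (x c) with hmB
  set mW : C → W := fun c => Sum.elim (fun _ => w₀) id (x c) with hmW
  have hxB : ∀ c ∈ blackSetT x, x c = Sum.inl (mB c) := by
    rintro c ⟨bc, hc⟩; simp [hmB, hc]
  have hxW : ∀ c ∈ whiteSetT x, x c = Sum.inr (mW c) := by
    rintro c ⟨wc, hc⟩; simp [hmW, hc]
  have hB := color_main bE (blackSetT x) mB
    (fun c hc c' hc' h => hinj (by rw [hxB c hc, hxB c' hc', h]))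
    (fun c hc => hincB c (mB c) (hxB c hc)) b₀
    (fun c hc h => hb₀u c (by rw [hxB c hc, h]))
    (fun v hv => by
      have : ¬ ∀ c, x c ≠ Sum.inl v := fun h => hv (hb₀uniq v h)
      push_neg at this
      obtain ⟨c, hc⟩ := this
      exact ⟨c, ⟨v, hc⟩, by simp [hmB, hc]⟩)
  have hW := color_main wE (whiteSetT x) mW
    (fun c hc c' hc' h => hinj (by rw [hxW c hc, hxW c' hc', h]))
    (fun c hc => hincW c (mW c) (hxW c hc)) w₀
    (fun c hc h => hw₀u c (by rw [hxW c hc, h]))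
    (fun v hv => by
      have : ¬ ∀ c, x c ≠ Sum.inr v := fun h => hv (hw₀uniq v h)
      push_neg at this
      obtain ⟨c, hc⟩ := this
      exact ⟨c, ⟨v, hc⟩, by simp [hmW, hc]⟩)
  simp only [IsTreeCompB, IsTreeCompW, compEB, compVB, compEW, compVW, reachB, reachW]
  refine ⟨fun b => (hB b).1, fun w => (hW w).1, ⟨b₀, ?_, ?_⟩, ⟨w₀, ?_, ?_⟩⟩
  · exact (hB b₀).2.mpr Relation.ReflTransGen.refl
  · exact fun b hb => reach_symm bE (blackSetT x) ((hB b).2.mp hb)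
  · exact (hW w₀).2.mpr Relation.ReflTransGen.refl
  · exact fun w hw => reach_symm wE (whiteSetT x) ((hW w).2.mp hw)
end

section
/- Let $x$ be a perfect admissible matching on the overlaid Tait graph $\Gamma(D)$ of a knot projection, and let $x'$ be obtained from $x$ by a single clock move (exchanging the matched regions of two crossings incident to a common square face, rotating the two state components around the face). Then $|J(x')| - |J(x)| \in \{-2, 0, 2\}$, where $|J(\cdot)|$ is the number of components of the Jordan resolution. -/
section Ends

variable {C : Type*}

/-- The ends of the arcs of a knot projection: four ends around each crossing, in cyclic
order.  The quadrant `i` at a crossing lies between the ends `i` and `i + 1`. -/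
abbrev Ends (C : Type*) := C × Fin 4

/-- The smoothing of the diagram determined by a state `x` assigning to each crossing the
quadrant containing its dot: at the crossing `c` the ends `x c` and `x c + 1` (bounding
the dotted quadrant) are joined, as are the ends `x c + 2` and `x c + 3`. -/
def quadSmooth (x : C → Fin 4) : Ends C → Ends C := fun e =>
  if e.2 = x e.1 then (e.1, x e.1 + 1)
  else if e.2 = x e.1 + 1 then (e.1, x e.1)
  else if e.2 = x e.1 + 2 then (e.1, x e.1 + 3)
  else (e.1, x e.1 + 2)

/-- The number of components of the Jordan resolution of the state `x`, for the diagram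
whose arcs are given by the fixed-point-free involution `α` on ends: components are the
equivalence classes of ends under travelling along arcs (`α`) and along the smoothing
(`quadSmooth x`). -/
noncomputable def Jcount (α : Ends C → Ends C) (x : C → Fin 4) : ℕ :=
  Nat.card (Quot (fun a b : Ends C => α a = b ∨ quadSmooth x a = b))

/-- Walking around a face: the quadrant `(c, i)` continues, across the arc leaving the
end `(c, i + 1)`, into the quadrant of the same index at the other end of that arc. -/
def faceStep (α : Ends C → Ends C) (q : Ends C) : Ends C := α (q.1, q.2 + 1)

/-- The regions of the diagram: quadrants up to the face-walking relation. -/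
def RegionT (α : Ends C → Ends C) :=
  Quot (fun q q' : Ends C => faceStep α q = q')

/-- The region containing a quadrant. -/
def regionOf (α : Ends C → Ends C) (q : Ends C) : RegionT α := Quot.mk _ q

/-- Black regions: those containing an even quadrant (chequerboard colouring). -/
def IsBlackR (α : Ends C → Ends C) (r : RegionT α) : Prop :=
  ∃ q : Ends C, (q.2 : ℕ) % 2 = 0 ∧ regionOf α q = r

/-- White regions: those containing an odd quadrant. -/
def IsWhiteR (α : Ends C → Ends C) (r : RegionT α) : Prop :=
  ∃ q : Ends C, (q.2 : ℕ) % 2 = 1 ∧ regionOf α q = r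

/-- The perfect matching `x` is admissible: exactly one unmatched black region and
exactly one unmatched white region. -/
def AdmissibleE (α : Ends C → Ends C) (x : C → Fin 4) : Prop :=
  Nat.card {r : RegionT α // IsBlackR α r ∧ ∀ c, regionOf α (c, x c) ≠ r} = 1 ∧
  Nat.card {r : RegionT α // IsWhiteR α r ∧ ∀ c, regionOf α (c, x c) ≠ r} = 1

/-- `S` is the set of crossings of a black monochromatic loop supported by `x`:
a cyclic alternating sequence of crossings `c i` and black regions `r i`, where `r i` and
`r (i+1)` are the two black regions at `c i` and `x` matches `c i` with `r i`. -/
def IsBlackLoopSet (α : Ends C → Ends C) (x : C → Fin 4) (S : Set C) : Prop :=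
  ∃ (k : ℕ) (c : Fin (k + 1) → C) (r : Fin (k + 1) → RegionT α),
    Function.Injective c ∧ Function.Injective r ∧ S = Set.range c ∧
    ∀ i, r i = regionOf α (c i, x (c i)) ∧ ((x (c i) : ℕ) % 2 = 0) ∧
      ({regionOf α (c i, (0 : Fin 4)), regionOf α (c i, (2 : Fin 4))} :
        Set (RegionT α)) = {r i, r (i + 1)}

/-- `S` is the set of crossings of a white monochromatic loop supported by `x`. -/
def IsWhiteLoopSet (α : Ends C → Ends C) (x : C → Fin 4) (S : Set C) : Prop :=
  ∃ (k : ℕ) (c : Fin (k + 1) → C) (r : Fin (k + 1) → RegionT α),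
    Function.Injective c ∧ Function.Injective r ∧ S = Set.range c ∧
    ∀ i, r i = regionOf α (c i, x (c i)) ∧ ((x (c i) : ℕ) % 2 = 1) ∧
      ({regionOf α (c i, (1 : Fin 4)), regionOf α (c i, (3 : Fin 4))} :
        Set (RegionT α)) = {r i, r (i + 1)}

/-- `S` is the crossing set of a monochromatic loop supported by `x`. -/
def IsMonoLoopSet (α : Ends C → Ends C) (x : C → Fin 4) (S : Set C) : Prop :=
  IsBlackLoopSet α x S ∨ IsWhiteLoopSet α x S

end Ends

section Stmt19Aux

open Relation

variable {β : Type*}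

private noncomputable def quotEquivOfMk {r s : β → β → Prop}
    (h1 : ∀ a b, r a b → Quot.mk s a = Quot.mk s b)
    (h2 : ∀ a b, s a b → Quot.mk r a = Quot.mk r b) : Quot r ≃ Quot s where
  toFun := Quot.lift (Quot.mk s) h1
  invFun := Quot.lift (Quot.mk r) h2
  left_inv q := Quot.inductionOn q fun _ => rfl
  right_inv q := Quot.inductionOn q fun _ => rfl

private theorem card_quot_le_of_imp [Finite β] {r s : β → β → Prop}
    (h : ∀ a b, r a b → s a b) : Nat.card (Quot s) ≤ Nat.card (Quot r) :=
  Nat.card_le_card_of_surjective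
    (Quot.lift (Quot.mk s) fun a b hab => Quot.sound (h a b hab))
    (fun q => Quot.inductionOn q fun a => ⟨Quot.mk r a, rfl⟩)

private theorem eqvGen_extra {r : β → β → Prop} {p q a b : β}
    (h : Relation.EqvGen (fun a b => r a b ∨ (a = p ∧ b = q)) a b) :
    Relation.EqvGen r a b ∨ (Relation.EqvGen r a p ∧ Relation.EqvGen r q b) ∨
      (Relation.EqvGen r a q ∧ Relation.EqvGen r p b) := by
  induction h with
  | rel s t hst =>
    rcases hst with hst | ⟨rfl, rfl⟩
    · exact Or.inl (Relation.EqvGen.rel _ _ hst)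
    · exact Or.inr (Or.inl ⟨Relation.EqvGen.refl _, Relation.EqvGen.refl _⟩)
  | refl s => exact Or.inl (Relation.EqvGen.refl s)
  | symm s t hst ih =>
    rcases ih with h | ⟨h1, h2⟩ | ⟨h1, h2⟩
    · exact Or.inl (Relation.EqvGen.symm _ _ h)
    · exact Or.inr (Or.inr ⟨Relation.EqvGen.symm _ _ h2, Relation.EqvGen.symm _ _ h1⟩)
    · exact Or.inr (Or.inl ⟨Relation.EqvGen.symm _ _ h2, Relation.EqvGen.symm _ _ h1⟩)
  | trans s t u hst htu ih1 ih2 =>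
    rcases ih1 with h | ⟨h1, h2⟩ | ⟨h1, h2⟩ <;> rcases ih2 with g | ⟨g1, g2⟩ | ⟨g1, g2⟩
    · exact Or.inl (Relation.EqvGen.trans _ _ _ h g)
    · exact Or.inr (Or.inl ⟨Relation.EqvGen.trans _ _ _ h g1, g2⟩)
    · exact Or.inr (Or.inr ⟨Relation.EqvGen.trans _ _ _ h g1, g2⟩)
    · exact Or.inr (Or.inl ⟨h1, Relation.EqvGen.trans _ _ _ h2 g⟩)
    · exact Or.inr (Or.inl ⟨h1, g2⟩)
    · exact Or.inl (Relation.EqvGen.trans _ _ _ h1 g2)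
    · exact Or.inr (Or.inr ⟨h1, Relation.EqvGen.trans _ _ _ h2 g⟩)
    · exact Or.inl (Relation.EqvGen.trans _ _ _ h1 g2)
    · exact Or.inr (Or.inr ⟨h1, g2⟩)

private theorem card_quot_extra_le [Finite β] (r : β → β → Prop) (p q : β) :
    Nat.card (Quot r) ≤ Nat.card (Quot (fun a b => r a b ∨ (a = p ∧ b = q))) + 1 := by
  classical
  let f : Quot r → Quot (fun a b => r a b ∨ (a = p ∧ b = q)) :=
    Quot.lift (Quot.mk _) (fun a b h => Quot.sound (Or.inl h))
  have hf : ∀ a, f (Quot.mk r a) = Quot.mk _ a := fun a => rfl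
  have key : ∀ x y : Quot r, f x = f y → x ≠ Quot.mk r p → y ≠ Quot.mk r p → x = y := by
    intro x y hxy hx hy
    obtain ⟨a, rfl⟩ := Quot.exists_rep x
    obtain ⟨b, rfl⟩ := Quot.exists_rep y
    rw [hf, hf, Quot.eq] at hxy
    rcases eqvGen_extra hxy with h | ⟨h1, _⟩ | ⟨_, h2⟩
    · exact Quot.eqvGen_sound h
    · exact absurd (Quot.eqvGen_sound h1) hx
    · exact absurd (Quot.eqvGen_sound h2).symm hy
  have hinj : Function.Injective (fun x : Quot r =>
      if x = Quot.mk r p then (Sum.inr () : Quot (fun a b => r a b ∨ (a = p ∧ b = q)) ⊕ Unit)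
      else Sum.inl (f x)) := by
    intro x y hxy
    dsimp only at hxy
    by_cases hx : x = Quot.mk r p <;> by_cases hy' : y = Quot.mk r p
    · rw [hx, hy']
    · rw [if_pos hx, if_neg hy'] at hxy; exact absurd hxy.symm (by simp)
    · rw [if_neg hx, if_pos hy'] at hxy; exact absurd hxy (by simp)
    · rw [if_neg hx, if_neg hy'] at hxy
      exact key x y (Sum.inl.inj hxy) hx hy'
  calc Nat.card (Quot r) ≤ Nat.card (Quot (fun a b => r a b ∨ (a = p ∧ b = q)) ⊕ Unit) :=
        Nat.card_le_card_of_injective _ hinj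
    _ = Nat.card (Quot (fun a b => r a b ∨ (a = p ∧ b = q))) + 1 := by
        rw [Nat.card_sum]; simp

end Stmt19Aux

section Stmt19Perm

open Equiv Equiv.Perm

private theorem card_quot_sameCycle {β : Type*} [Fintype β] [DecidableEq β] (g : Equiv.Perm β) :
    Nat.card (Quot g.SameCycle) + g.support.card =
      Fintype.card β + Multiset.card g.cycleType := by
  classical
  have key : Nat.card (Quot g.SameCycle) =
      Nat.card ({b : β // g b = b} ⊕ {c : Perm β // c ∈ g.cycleFactorsFinset}) := by
    let f0 : β → {b : β // g b = b} ⊕ {c : Perm β // c ∈ g.cycleFactorsFinset} := fun b =>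
      if h : g b = b then Sum.inl ⟨b, h⟩
      else Sum.inr ⟨g.cycleOf b, cycleOf_mem_cycleFactorsFinset_iff.mpr (mem_support.mpr h)⟩
    have hf0p : ∀ b (h : g b = b), f0 b = Sum.inl ⟨b, h⟩ := fun b h => dif_pos h
    have hf0n : ∀ b (h : ¬ g b = b), f0 b =
        Sum.inr ⟨g.cycleOf b, cycleOf_mem_cycleFactorsFinset_iff.mpr (mem_support.mpr h)⟩ :=
      fun b h => dif_neg h
    have hfix : ∀ (u v : β), g.SameCycle u v → g u = u → v = u := by
      rintro u v ⟨n, rfl⟩ hu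
      exact zpow_apply_eq_self_of_apply_eq_self hu n
    have hwd : ∀ u v, g.SameCycle u v → f0 u = f0 v := by
      intro u v huv
      by_cases hu : g u = u
      · obtain rfl := hfix u v huv hu
        rfl
      · have hv : ¬ g v = v := by
          intro hv
          obtain rfl := hfix v u huv.symm hv
          exact hu hv
        rw [hf0n u hu, hf0n v hv]
        congr 1
        exact Subtype.ext huv.cycleOf_eq
    let F : Quot g.SameCycle → _ := Quot.lift f0 hwd
    refine Nat.card_congr (Equiv.ofBijective F ⟨?_, ?_⟩)
    · intro q1 q2
      refine Quot.inductionOn q1 fun u => Quot.inductionOn q2 fun v => ?_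
      intro huv
      have huv' : f0 u = f0 v := huv
      by_cases hu : g u = u <;> by_cases hv : g v = v
      · rw [hf0p u hu, hf0p v hv] at huv'
        simp only [Sum.inl.injEq, Subtype.mk.injEq] at huv'
        exact congrArg _ huv'
      · rw [hf0p u hu, hf0n v hv] at huv'; exact absurd huv' (by simp)
      · rw [hf0n u hu, hf0p v hv] at huv'; exact absurd huv' (by simp)
      · rw [hf0n u hu, hf0n v hv] at huv'
        simp only [Sum.inr.injEq, Subtype.mk.injEq] at huv'
        have hvmem : v ∈ (g.cycleOf v).support :=
          mem_support_cycleOf_iff.mpr ⟨SameCycle.refl _ _, mem_support.mpr hv⟩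
        rw [← huv'] at hvmem
        exact Quot.sound (mem_support_cycleOf_iff.mp hvmem).1
    · rintro (⟨b, hb⟩ | ⟨cc, hcc⟩)
      · exact ⟨Quot.mk _ b, hf0p b hb⟩
      · obtain ⟨x, hx, -⟩ := (mem_cycleFactorsFinset_iff.mp hcc).1
        have hxs : x ∈ cc.support := mem_support.mpr hx
        have hceq : cc = g.cycleOf x := cycle_is_cycleOf hxs hcc
        have hgx : ¬ g x = x := mem_support.mp (mem_cycleFactorsFinset_support_le hcc hxs)
        refine ⟨Quot.mk _ x, ?_⟩
        rw [show F (Quot.mk _ x) = f0 x from rfl, hf0n x hgx]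
        congr 1
        exact Subtype.ext hceq.symm
  have c1 : Nat.card {b : β // g b = b} = Fintype.card β - g.support.card := by
    rw [Nat.card_eq_fintype_card, Fintype.card_subtype]
    have : Finset.filter (fun b => g b = b) Finset.univ = g.supportᶜ := by
      ext b; simp [Equiv.Perm.mem_support]
    rw [this, Finset.card_compl]
  have c2 : Nat.card {c : Perm β // c ∈ g.cycleFactorsFinset} = Multiset.card g.cycleType := by
    rw [Nat.card_eq_fintype_card, Fintype.card_coe, cycleType_def, Multiset.card_map]
    rfl
  have hsupp : g.support.card ≤ Fintype.card β := Finset.card_le_univ _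
  rw [key, Nat.card_sum, c1, c2]
  omega

private theorem neg_one_pow_mod (a b : ℕ) (h : a % 2 = b % 2) :
    ((-1 : ℤˣ)) ^ a = (-1 : ℤˣ) ^ b := by
  rcases Nat.even_or_odd a with ha | ha
  · have hb : Even b := by rw [Nat.even_iff] at *; omega
    rw [ha.neg_one_pow, hb.neg_one_pow]
  · have hb : Odd b := by rw [Nat.odd_iff] at *; omega
    rw [ha.neg_one_pow, hb.neg_one_pow]

private theorem sameCycle_card_parity {β : Type*} [Fintype β] [DecidableEq β]
    (g : Equiv.Perm β) (u v : β) (huv : u ≠ v) :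
    Nat.card (Quot (g * Equiv.swap u v).SameCycle) % 2 ≠ Nat.card (Quot g.SameCycle) % 2 := by
  classical
  intro hcon
  have h1 := card_quot_sameCycle g
  have h2 := card_quot_sameCycle (g * Equiv.swap u v)
  have hs : Equiv.Perm.sign (g * Equiv.swap u v) = - Equiv.Perm.sign g := by
    rw [Equiv.Perm.sign_mul, Equiv.Perm.sign_swap huv, mul_neg_one]
  rw [Equiv.Perm.sign_of_cycleType, Equiv.Perm.sign_of_cycleType,
    Equiv.Perm.sum_cycleType, Equiv.Perm.sum_cycleType] at hs
  have hpar : ((g * Equiv.swap u v).support.card + Multiset.card (g * Equiv.swap u v).cycleType) % 2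
      = (g.support.card + Multiset.card g.cycleType) % 2 := by omega
  rw [neg_one_pow_mod _ _ hpar] at hs
  rcases Int.units_eq_one_or ((-1 : ℤˣ) ^ (g.support.card + Multiset.card g.cycleType)) with h | h <;>
    rw [h] at hs <;> exact absurd hs (by decide)

end Stmt19Perm

section Stmt19Quad

private def qsFun (a i : Fin 4) : Fin 4 :=
  if i = a then a + 1 else if i = a + 1 then a else if i = a + 2 then a + 3 else a + 2

private theorem quadSmooth_eq {C : Type*} (y : C → Fin 4) (e : Ends C) :
    quadSmooth y e = (e.1, qsFun (y e.1) e.2) := by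
  rcases e with ⟨c, i⟩
  simp only [quadSmooth, qsFun]
  split_ifs <;> rfl

private theorem qsFun_invol : ∀ a i : Fin 4, qsFun a (qsFun a i) = i := by decide
private theorem qsFun_parity : ∀ a i : Fin 4, ((qsFun a i : Fin 4) : ℕ) % 2 = ((i : ℕ) + 1) % 2 := by
  decide
private theorem qsFun_add_two : ∀ a i : Fin 4, qsFun (a + 2) i = qsFun a i := by decide
private theorem qsFun_succ : ∀ a i : Fin 4, qsFun (a + 1) i = qsFun a (i + 2) := by decide

private theorem quadSmooth_invol {C : Type*} (y : C → Fin 4) :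
    Function.Involutive (quadSmooth y) := by
  intro e
  rw [quadSmooth_eq, quadSmooth_eq]
  cases e
  simp [qsFun_invol]

private theorem quadSmooth_congr {C : Type*} {x y : C → Fin 4}
    (h : ∀ c, x c = y c ∨ x c = y c + 2) : quadSmooth x = quadSmooth y := by
  funext e
  rw [quadSmooth_eq, quadSmooth_eq]
  rcases h e.1 with h' | h' <;> rw [h']
  rw [qsFun_add_two]

private theorem card_quot_j {S : Type*} (α σ : S → S) (p : S → Prop) [DecidablePred p]
    (hα : ∀ e, α (α e) = e) (hσ : ∀ e, σ (σ e) = e)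
    (hαp : ∀ e, p (α e) ↔ ¬ p e) (hσp : ∀ e, p (σ e) ↔ ¬ p e)
    (g : Equiv.Perm {e : S // p e})
    (hg : ∀ e : {e : S // p e}, (g e : S) = α (σ (e : S))) :
    Nat.card (Quot (fun s t : S => α s = t ∨ σ s = t)) = Nat.card (Quot g.SameCycle) := by
  classical
  set r : S → S → Prop := fun s t => α s = t ∨ σ s = t with hr
  have hσp' : ∀ e, ¬ p e → p (σ e) := fun e he => (hσp e).mpr he
  let F0 : S → Quot g.SameCycle := fun e =>
    if h : p e then Quot.mk _ ⟨e, h⟩ else Quot.mk _ ⟨σ e, hσp' e h⟩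
  have hF0p : ∀ e (h : p e), F0 e = Quot.mk _ ⟨e, h⟩ := fun e h => dif_pos h
  have hF0n : ∀ e (h : ¬ p e), F0 e = Quot.mk _ ⟨σ e, hσp' e h⟩ := fun e h => dif_neg h
  have hgs : ∀ u v : {e : S // p e}, g u = v → Quot.mk g.SameCycle u = Quot.mk _ v :=
    fun u v h => Quot.sound ⟨1, by rwa [zpow_one]⟩
  have hwd : ∀ s t, r s t → F0 s = F0 t := by
    intro s t hst
    rcases hst with rfl | rfl
    · by_cases hs : p s
      · have ht : ¬ p (α s) := by rw [hαp]; exact not_not_intro hs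
        rw [hF0p s hs, hF0n _ ht]
        refine (hgs ⟨σ (α s), hσp' _ ht⟩ ⟨s, hs⟩ ?_).symm
        apply Subtype.ext
        rw [hg]
        show α (σ (σ (α s))) = s
        rw [hσ, hα]
      · have ht : p (α s) := (hαp s).mpr hs
        rw [hF0n s hs, hF0p _ ht]
        refine hgs ⟨σ s, hσp' s hs⟩ ⟨α s, ht⟩ ?_
        apply Subtype.ext
        rw [hg]
        show α (σ (σ s)) = α s
        rw [hσ]
    · by_cases hs : p s
      · have ht : ¬ p (σ s) := fun hh => ((hσp s).mp hh) hs
        rw [hF0p s hs, hF0n _ ht]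
        congr 1
        exact Subtype.ext (hσ s).symm
      · have ht : p (σ s) := hσp' s hs
        rw [hF0n s hs, hF0p _ ht]
  let Fq : Quot r → Quot g.SameCycle := Quot.lift F0 hwd
  have hstep : ∀ u : {e : S // p e}, Quot.mk r ((g u : {e : S // p e}) : S) = Quot.mk r (u : S) := by
    intro u
    have h1 : Quot.mk r ((u : S)) = Quot.mk r (σ (u : S)) := Quot.sound (Or.inr rfl)
    have h2 : Quot.mk r (σ (u : S)) = Quot.mk r (α (σ (u : S))) := Quot.sound (Or.inl rfl)
    rw [hg]
    exact (h1.trans h2).symm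
  have hstep' : ∀ u : {e : S // p e},
      Quot.mk r ((g⁻¹ u : {e : S // p e}) : S) = Quot.mk r (u : S) := by
    intro u
    have h := hstep (g⁻¹ u)
    rw [show g (g⁻¹ u) = u from g.apply_symm_apply u] at h
    exact h.symm
  have hzpow : ∀ (n : ℤ) (u : {e : S // p e}),
      Quot.mk r (((g ^ n) u : {e : S // p e}) : S) = Quot.mk r (u : S) := by
    intro n
    induction n using Int.induction_on with
    | zero => intro u; rw [zpow_zero]; rfl
    | succ k ih =>
      intro u
      have hmul : g ^ ((k : ℤ) + 1) = g ^ (k : ℤ) * g := zpow_add_one g (k : ℤ)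
      rw [hmul, Equiv.Perm.mul_apply, ih (g u), hstep u]
    | pred k ih =>
      intro u
      have hmul : g ^ (-(k : ℤ) - 1) = g ^ (-(k : ℤ)) * g⁻¹ := zpow_sub_one g (-(k : ℤ))
      rw [hmul, Equiv.Perm.mul_apply, ih (g⁻¹ u), hstep' u]
  have hGwd : ∀ u v : {e : S // p e}, g.SameCycle u v →
      Quot.mk r (u : S) = Quot.mk r (v : S) := by
    rintro u v ⟨n, rfl⟩
    exact (hzpow n u).symm
  let Gq : Quot g.SameCycle → Quot r := Quot.lift (fun u => Quot.mk r (u : S)) hGwd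
  apply Nat.card_congr
  refine ⟨Fq, Gq, ?_, ?_⟩
  · intro q
    refine Quot.inductionOn q fun e => ?_
    have hFe : Fq (Quot.mk r e) = F0 e := rfl
    by_cases he : p e
    · calc Gq (Fq (Quot.mk r e)) = Gq (F0 e) := congrArg Gq hFe
        _ = Gq (Quot.mk _ ⟨e, he⟩) := congrArg Gq (hF0p e he)
        _ = Quot.mk r e := rfl
    · calc Gq (Fq (Quot.mk r e)) = Gq (F0 e) := congrArg Gq hFe
        _ = Gq (Quot.mk _ ⟨σ e, hσp' e he⟩) := congrArg Gq (hF0n e he)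
        _ = Quot.mk r (σ e) := rfl
        _ = Quot.mk r e := (Quot.sound (show r e (σ e) from Or.inr rfl)).symm
  · intro q
    refine Quot.inductionOn q fun u => ?_
    have hGu : Gq (Quot.mk g.SameCycle u) = Quot.mk r (u : S) := rfl
    calc Fq (Gq (Quot.mk g.SameCycle u)) = Fq (Quot.mk r (u : S)) := congrArg Fq hGu
      _ = F0 (u : S) := rfl
      _ = Quot.mk _ ⟨(u : S), u.2⟩ := hF0p _ u.2
      _ = Quot.mk g.SameCycle u := rfl

end Stmt19Quad

section Stmt19Main

private theorem jstep {C : Type*} [Fintype C] (α : Ends C → Ends C)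
    (hinv : Function.Involutive α)
    (hcheq : ∀ q : Ends C, ((faceStep α q).2 : ℕ) % 2 = (q.2 : ℕ) % 2)
    (z w : C → Fin 4) (c : C) (hwc : w c = z c + 1)
    (hw : ∀ d, d ≠ c → w d = z d) :
    (Jcount α w : ℤ) - Jcount α z = 1 ∨ (Jcount α w : ℤ) - Jcount α z = -1 := by
  classical
  have hq : ∀ a : Fin 4, qsFun a a = a + 1 ∧ qsFun a (a + 1) = a ∧ qsFun a (a + 2) = a + 3 ∧
      qsFun a (a + 3) = a + 2 ∧ qsFun (a + 1) a = a + 3 ∧ qsFun (a + 1) (a + 1) = a + 2 ∧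
      qsFun (a + 1) (a + 2) = a + 1 ∧ qsFun (a + 1) (a + 3) = a := by decide
  have four_cases : ∀ i a : Fin 4, i = a ∨ i = a + 1 ∨ i = a + 2 ∨ i = a + 3 := by decide
  have colα : ∀ e : Ends C, ((α e).2 : ℕ) % 2 = ((e.2 : ℕ) + 1) % 2 := by
    intro e
    have h4 : ∀ j : Fin 4, j + 3 + 1 = j := by decide
    have h5 : ∀ j : Fin 4, ((j + 3 : Fin 4) : ℕ) % 2 = ((j : ℕ) + 1) % 2 := by decide
    have h := hcheq (e.1, e.2 + 3)
    dsimp only [faceStep] at h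
    rw [h4] at h
    rw [show ((e.1, e.2) : Ends C) = e from rfl] at h
    rw [h, h5]
  have colσ : ∀ (y : C → Fin 4) (e : Ends C),
      (((quadSmooth y e).2 : Fin 4) : ℕ) % 2 = ((e.2 : ℕ) + 1) % 2 := by
    intro y e
    rw [quadSmooth_eq]
    exact qsFun_parity _ _
  let p : Ends C → Prop := fun e => (e.2 : ℕ) % 2 = 0
  have hαp : ∀ e, p (α e) ↔ ¬ p e := by
    intro e
    have := colα e
    show ((α e).2 : ℕ) % 2 = 0 ↔ ¬ ((e.2 : ℕ) % 2 = 0)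
    omega
  have hσp : ∀ (y : C → Fin 4) (e : Ends C), p (quadSmooth y e) ↔ ¬ p e := by
    intro y e
    have := colσ y e
    show ((quadSmooth y e).2 : ℕ) % 2 = 0 ↔ ¬ ((e.2 : ℕ) % 2 = 0)
    omega
  have hpres : ∀ (y : C → Fin 4) (e : Ends C),
      p e ↔ p ((Function.Involutive.toPerm _ hinv *
        Function.Involutive.toPerm _ (quadSmooth_invol y)) e) := by
    intro y e
    have h1 := colσ y e
    have h2 := colα (quadSmooth y e)
    show (e.2 : ℕ) % 2 = 0 ↔ ((α (quadSmooth y e)).2 : ℕ) % 2 = 0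
    omega
  let PE : (C → Fin 4) → Equiv.Perm {e : Ends C // p e} := fun y =>
    (Function.Involutive.toPerm _ hinv *
      Function.Involutive.toPerm _ (quadSmooth_invol y)).subtypePerm (fun e => (hpres y e).symm)
  have hJ : ∀ y : C → Fin 4, Jcount α y = Nat.card (Quot (PE y).SameCycle) := by
    intro y
    exact card_quot_j α (quadSmooth y) p hinv (quadSmooth_invol y) hαp (hσp y) (PE y)
      (fun e => rfl)
  -- the swap points
  have hpar2 : ∀ j : Fin 4, ((j + 1 : Fin 4) : ℕ) % 2 = ((j : ℕ) + 1) % 2 := by decide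
  have hpar2' : ∀ j : Fin 4, ((j + 2 : Fin 4) : ℕ) % 2 = (j : ℕ) % 2 := by decide
  obtain ⟨b, hb0, hbcase⟩ : ∃ b : Fin 4, ((b : ℕ)) % 2 = 0 ∧ (b = z c ∨ b = z c + 1) := by
    rcases Nat.mod_two_eq_zero_or_one ((z c : ℕ)) with h | h
    · exact ⟨z c, h, Or.inl rfl⟩
    · refine ⟨z c + 1, ?_, Or.inr rfl⟩
      rw [hpar2]; omega
  have hbv : (((b + 2 : Fin 4)) : ℕ) % 2 = 0 := by rw [hpar2']; exact hb0
  let u : {e : Ends C // p e} := ⟨(c, b), hb0⟩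
  let v : {e : Ends C // p e} := ⟨(c, b + 2), hbv⟩
  have huv : u ≠ v := by
    intro h
    have h2 : ((c, b) : Ends C) = (c, b + 2) := congrArg Subtype.val h
    have h3 : b = b + 2 := congrArg Prod.snd h2
    have h4 : ∀ j : Fin 4, ¬ (j = j + 2) := by decide
    exact h4 b h3
  have hC1 : ∀ e : Ends C, quadSmooth w e =
      quadSmooth z (if e.1 = c then ((e.1, e.2 + 2) : Ends C) else e) := by
    intro e
    by_cases hec : e.1 = c
    · rw [if_pos hec, quadSmooth_eq, quadSmooth_eq]
      show ((e.1, qsFun (w e.1) e.2) : Ends C) = (e.1, qsFun (z e.1) (e.2 + 2))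
      rw [hec, hwc, qsFun_succ]
    · rw [if_neg hec, quadSmooth_eq, quadSmooth_eq, hw e.1 hec]
  have hC2 : ∀ eE : {e : Ends C // p e},
      (if (eE : Ends C).1 = c then (((eE : Ends C).1, (eE : Ends C).2 + 2) : Ends C)
        else (eE : Ends C)) = ((Equiv.swap u v eE : {e : Ends C // p e}) : Ends C) := by
    rintro ⟨⟨c0, i⟩, hpe⟩
    have hpe' : (i : ℕ) % 2 = 0 := hpe
    by_cases hc0 : c0 = c
    · subst hc0
      have hib : i = b ∨ i = b + 2 := by
        have key : ∀ i b : Fin 4, (i : ℕ) % 2 = 0 → (b : ℕ) % 2 = 0 → i = b ∨ i = b + 2 := by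
          decide
        exact key i b hpe' hb0
      show (if c0 = c0 then ((c0, i + 2) : Ends C) else (c0, i))
          = ((Equiv.swap u v ⟨(c0, i), hpe⟩ : {e : Ends C // p e}) : Ends C)
      rw [if_pos rfl]
      rcases hib with rfl | rfl
      · have he : (⟨(c0, i), hpe⟩ : {e : Ends C // p e}) = u := Subtype.ext rfl
        rw [he, Equiv.swap_apply_left]
      · have he : (⟨(c0, b + 2), hpe⟩ : {e : Ends C // p e}) = v := Subtype.ext rfl
        rw [he, Equiv.swap_apply_right]
        show ((c0, b + 2 + 2) : Ends C) = (c0, b)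
        have h22 : ∀ j : Fin 4, j + 2 + 2 = j := by decide
        rw [h22]
    · show (if c0 = c then ((c0, i + 2) : Ends C) else (c0, i))
          = ((Equiv.swap u v ⟨(c0, i), hpe⟩ : {e : Ends C // p e}) : Ends C)
      rw [if_neg hc0]
      have h1 : (⟨(c0, i), hpe⟩ : {e : Ends C // p e}) ≠ u := by
        intro h
        exact hc0 (congrArg (fun t : {e : Ends C // p e} => (t : Ends C).1) h)
      have h2 : (⟨(c0, i), hpe⟩ : {e : Ends C // p e}) ≠ v := by
        intro h
        exact hc0 (congrArg (fun t : {e : Ends C // p e} => (t : Ends C).1) h)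
      rw [Equiv.swap_apply_of_ne_of_ne h1 h2]
  have hPE : PE w = PE z * Equiv.swap u v := by
    apply Equiv.ext
    intro eE
    apply Subtype.ext
    show α (quadSmooth w (eE : Ends C))
        = α (quadSmooth z ((Equiv.swap u v eE : {e : Ends C // p e}) : Ends C))
    rw [hC1, hC2 eE]
  have hparJ : Jcount α w % 2 ≠ Jcount α z % 2 := by
    rw [hJ w, hJ z, hPE]
    exact sameCycle_card_parity (PE z) u v huv
  -- the bound
  let r2 : Ends C → Ends C → Prop := fun s t =>
    (α s = t ∨ quadSmooth z s = t) ∨ (s = ((c, z c + 1) : Ends C) ∧ t = (c, z c + 2))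
  let r2' : Ends C → Ends C → Prop := fun s t =>
    (α s = t ∨ quadSmooth w s = t) ∨ (s = ((c, z c) : Ends C) ∧ t = (c, z c + 1))
  have z12 : quadSmooth z ((c, z c) : Ends C) = (c, z c + 1) := by
    rw [quadSmooth_eq]
    show ((c, qsFun (z c) (z c)) : Ends C) = (c, z c + 1)
    rw [(hq (z c)).1]
  have z21 : quadSmooth z ((c, z c + 1) : Ends C) = (c, z c) := by
    rw [quadSmooth_eq]
    show ((c, qsFun (z c) (z c + 1)) : Ends C) = (c, z c)
    rw [(hq (z c)).2.1]
  have z34 : quadSmooth z ((c, z c + 2) : Ends C) = (c, z c + 3) := by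
    rw [quadSmooth_eq]
    show ((c, qsFun (z c) (z c + 2)) : Ends C) = (c, z c + 3)
    rw [(hq (z c)).2.2.1]
  have z43 : quadSmooth z ((c, z c + 3) : Ends C) = (c, z c + 2) := by
    rw [quadSmooth_eq]
    show ((c, qsFun (z c) (z c + 3)) : Ends C) = (c, z c + 2)
    rw [(hq (z c)).2.2.2.1]
  have w14 : quadSmooth w ((c, z c) : Ends C) = (c, z c + 3) := by
    rw [quadSmooth_eq]
    show ((c, qsFun (w c) (z c)) : Ends C) = (c, z c + 3)
    rw [hwc, (hq (z c)).2.2.2.2.1]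
  have w23 : quadSmooth w ((c, z c + 1) : Ends C) = (c, z c + 2) := by
    rw [quadSmooth_eq]
    show ((c, qsFun (w c) (z c + 1)) : Ends C) = (c, z c + 2)
    rw [hwc, (hq (z c)).2.2.2.2.2.1]
  have w32 : quadSmooth w ((c, z c + 2) : Ends C) = (c, z c + 1) := by
    rw [quadSmooth_eq]
    show ((c, qsFun (w c) (z c + 2)) : Ends C) = (c, z c + 1)
    rw [hwc, (hq (z c)).2.2.2.2.2.2.1]
  have w41 : quadSmooth w ((c, z c + 3) : Ends C) = (c, z c) := by
    rw [quadSmooth_eq]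
    show ((c, qsFun (w c) (z c + 3)) : Ends C) = (c, z c)
    rw [hwc, (hq (z c)).2.2.2.2.2.2.2]
  have offc : ∀ e : Ends C, e.1 ≠ c → quadSmooth w e = quadSmooth z e := by
    intro e he
    rw [quadSmooth_eq, quadSmooth_eq, hw e.1 he]
  have sound2' : ∀ {s t : Ends C}, (α s = t ∨ quadSmooth w s = t) →
      Quot.mk r2' s = Quot.mk r2' t :=
    fun h => Quot.sound (show r2' _ _ from Or.inl h)
  have extra2' : Quot.mk r2' ((c, z c) : Ends C) = Quot.mk r2' (c, z c + 1) :=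
    Quot.sound (show r2' _ _ from Or.inr ⟨rfl, rfl⟩)
  have inc1 : ∀ s t, r2 s t → Quot.mk r2' s = Quot.mk r2' t := by
    intro s t hst
    rcases hst with (hst | hst) | ⟨rfl, rfl⟩
    · exact sound2' (Or.inl hst)
    · subst hst
      by_cases hsc : s.1 = c
      · obtain ⟨c1, i⟩ := s
        have hsc' : c = c1 := Eq.symm hsc
        subst hsc'
        rcases four_cases i (z c) with rfl | rfl | rfl | rfl
        · rw [z12]; exact extra2'
        · rw [z21]; exact extra2'.symm
        · rw [z34]
          exact (sound2' (Or.inr w32)).trans (extra2'.symm.trans (sound2' (Or.inr w14)))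
        · rw [z43]
          exact ((sound2' (Or.inr w32)).trans
            (extra2'.symm.trans (sound2' (Or.inr w14)))).symm
      · rw [← offc s hsc]
        exact sound2' (Or.inr rfl)
    · exact sound2' (Or.inr w23)
  have sound2 : ∀ {s t : Ends C}, (α s = t ∨ quadSmooth z s = t) →
      Quot.mk r2 s = Quot.mk r2 t :=
    fun h => Quot.sound (show r2 _ _ from Or.inl h)
  have extra2 : Quot.mk r2 ((c, z c + 1) : Ends C) = Quot.mk r2 (c, z c + 2) :=
    Quot.sound (show r2 _ _ from Or.inr ⟨rfl, rfl⟩)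
  have inc2 : ∀ s t, r2' s t → Quot.mk r2 s = Quot.mk r2 t := by
    intro s t hst
    rcases hst with (hst | hst) | ⟨rfl, rfl⟩
    · exact sound2 (Or.inl hst)
    · subst hst
      by_cases hsc : s.1 = c
      · obtain ⟨c1, i⟩ := s
        have hsc' : c = c1 := Eq.symm hsc
        subst hsc'
        rcases four_cases i (z c) with rfl | rfl | rfl | rfl
        · rw [w14]
          exact (sound2 (Or.inr z12)).trans (extra2.trans (sound2 (Or.inr z34)))
        · rw [w23]; exact extra2
        · rw [w32]; exact extra2.symm
        · rw [w41]
          exact ((sound2 (Or.inr z12)).trans (extra2.trans (sound2 (Or.inr z34)))).symm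
      · rw [offc s hsc]
        exact sound2 (Or.inr rfl)
    · exact sound2 (Or.inr z12)
  have hcard12 : Nat.card (Quot r2) = Nat.card (Quot r2') :=
    Nat.card_congr (quotEquivOfMk inc1 inc2)
  have b1 : Jcount α z ≤ Nat.card (Quot r2) + 1 :=
    card_quot_extra_le (fun s t : Ends C => α s = t ∨ quadSmooth z s = t)
      ((c, z c + 1) : Ends C) ((c, z c + 2) : Ends C)
  have b2 : Nat.card (Quot r2) ≤ Jcount α z :=
    card_quot_le_of_imp (fun s t h => Or.inl h)
  have b3 : Jcount α w ≤ Nat.card (Quot r2') + 1 :=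
    card_quot_extra_le (fun s t : Ends C => α s = t ∨ quadSmooth w s = t)
      ((c, z c) : Ends C) ((c, z c + 1) : Ends C)
  have b4 : Nat.card (Quot r2') ≤ Jcount α w :=
    card_quot_le_of_imp (fun s t h => Or.inl h)
  omega

end Stmt19Main


/-- A clock move on a perfect admissible matching -- rotating by one
quadrant the dots of two distinct crossings `c₁, c₂` incident to a common square face
(here recorded by an arc of the diagram joining them), leaving all other crossings
unchanged -- changes the number of components of the Jordan resolution by `-2`, `0`
or `2`. -/
theorem stmt19 {C : Type*} [Fintype C] (α : Ends C → Ends C)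
    (hinv : Function.Involutive α) (hne : ∀ e, α e ≠ e)
    (hcheq : ∀ q : Ends C, ((faceStep α q).2 : ℕ) % 2 = (q.2 : ℕ) % 2)
    (x x' : C → Fin 4)
    (hpm : Function.Injective (fun c => regionOf α (c, x c)))
    (hpm' : Function.Injective (fun c => regionOf α (c, x' c)))
    (hadm : AdmissibleE α x) (hadm' : AdmissibleE α x')
    (c₁ c₂ : C) (hc : c₁ ≠ c₂)
    (hadj : ∃ i j : Fin 4, α (c₁, i) = (c₂, j))
    (hrot₁ : x' c₁ = x c₁ + 1 ∨ x' c₁ = x c₁ - 1)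
    (hrot₂ : x' c₂ = x c₂ + 1 ∨ x' c₂ = x c₂ - 1)
    (hrest : ∀ c, c ≠ c₁ → c ≠ c₂ → x' c = x c) :
    ((Jcount α x' : ℤ) - (Jcount α x : ℤ)) ∈ ({-2, 0, 2} : Set ℤ) := by
  classical
  let y : C → Fin 4 := fun d => if d = c₁ then x c₁ + 1 else x d
  let y₂ : C → Fin 4 := fun d => if d = c₂ then y c₂ + 1 else y d
  have hyc : y c₁ = x c₁ + 1 := if_pos rfl
  have hyrest : ∀ d, d ≠ c₁ → y d = x d := fun d hd => if_neg hd
  have hy2c : y₂ c₂ = y c₂ + 1 := if_pos rfl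
  have hy2rest : ∀ d, d ≠ c₂ → y₂ d = y d := fun d hd => if_neg hd
  have h1 := jstep α hinv hcheq x y c₁ hyc hyrest
  have h2 := jstep α hinv hcheq y y₂ c₂ hy2c hy2rest
  have hxy : ∀ d, x' d = y₂ d ∨ x' d = y₂ d + 2 := by
    intro d
    have hsub : ∀ j : Fin 4, j - 1 = (j + 1) + 2 := by decide
    by_cases hd1 : d = c₁
    · subst hd1
      have hda : y₂ d = x d + 1 := by
        rw [hy2rest d hc]
        exact hyc
      rcases hrot₁ with h | h
      · exact Or.inl (by rw [h, hda])
      · right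
        rw [h, hda]
        exact hsub (x d)
    · by_cases hd2 : d = c₂
      · subst hd2
        have hda : y₂ d = x d + 1 := by
          rw [hy2c, hyrest d (fun hh => hc hh.symm)]
        rcases hrot₂ with h | h
        · exact Or.inl (by rw [h, hda])
        · right
          rw [h, hda]
          exact hsub (x d)
      · left
        rw [hrest d hd1 hd2, hy2rest d hd2, hyrest d hd1]
  have hqs : quadSmooth x' = quadSmooth y₂ := quadSmooth_congr hxy
  have h3 : Jcount α x' = Jcount α y₂ := by
    simp only [Jcount, hqs]
  simp only [Set.mem_insert_iff, Set.mem_singleton_iff]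
  rw [h3]
  omega
end
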